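/- arXiv:1311.0191 — 3 statements merged into one kernel-verified Lean document; each statement's English description precedes it below -/
import Mathlib

section
/- Let f be a Fibonacci map. Then for every n ≥ 1, the iterate f^{S_n} is strictly monotone on the interval between u_n and c. -/
noncomputable section

/-- The Fibonacci numbers `S 0 = 1`, `S 1 = 2`, `S (k+2) = S (k+1) + S k`. -/
def fibS : ℕ → ℕ
  | 0 => 1
  | 1 => 2
  | n + 2 => fibS (n + 1) + fibS n

/-- `f : [0,1] → [0,1]` is unimodal with critical point `c`: continuous, maps `[0,1]` into
itself, `f 0 = f 1 = 0`, `c ∈ (0,1)`, strictly increasing on `[0,c]`, strictly decreasing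
on `[c,1]`. -/
def IsUnimodal (f : ℝ → ℝ) (c : ℝ) : Prop :=
  ContinuousOn f (Set.Icc 0 1) ∧ Set.MapsTo f (Set.Icc 0 1) (Set.Icc 0 1) ∧
  f 0 = 0 ∧ f 1 = 0 ∧ c ∈ Set.Ioo (0 : ℝ) 1 ∧
  StrictMonoOn f (Set.Icc 0 c) ∧ StrictAntiOn f (Set.Icc c 1)

/-- `f` is symmetric about `c`: `f (2c - x) = f x` whenever both points lie in `[0,1]`
(the symmetric point of `x` is `x̂ = 2c - x`). -/
def SymmetricAbout (f : ℝ → ℝ) (c : ℝ) : Prop :=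
  ∀ x ∈ Set.Icc (0 : ℝ) 1, 2 * c - x ∈ Set.Icc (0 : ℝ) 1 → f (2 * c - x) = f x

/-- The distance from `c` to a nearest `k`-th preimage `c₋ₖ` of `c` in `[0,1]`,
i.e. `|c₋ₖ - c| = |c₋ₖ|`. -/
def preimDist (f : ℝ → ℝ) (c : ℝ) (k : ℕ) : ℝ :=
  sInf ((fun x => |x - c|) '' {x | x ∈ Set.Icc (0 : ℝ) 1 ∧ f^[k] x = c})

/-- `S` is the sequence of cutting times of `f`: `S 0 = 1`, and `S (i+1)` is the least
`k ≥ S i` for which the nearest `k`-th preimage `c₋ₖ` of `c` lies in the symmetric open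
interval `(c₋ₛᵢ, (c₋ₛᵢ)^)`, i.e. `c₋ₖ` exists and is strictly closer to `c` than `c₋ₛᵢ`. -/
def IsCuttingSeq (f : ℝ → ℝ) (c : ℝ) (S : ℕ → ℕ) : Prop :=
  S 0 = 1 ∧ ∀ i, IsLeast {k | S i ≤ k ∧
    ({x | x ∈ Set.Icc (0 : ℝ) 1 ∧ f^[k] x = c}).Nonempty ∧
    preimDist f c k < preimDist f c (S i)} (S (i + 1))

/-- A Fibonacci map: a symmetric unimodal map whose cutting times are exactly the
Fibonacci numbers `1, 2, 3, 5, 8, …`. -/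
def IsFibonacciMap (f : ℝ → ℝ) (c : ℝ) : Prop :=
  IsUnimodal f c ∧ SymmetricAbout f c ∧ IsCuttingSeq f c fibS

namespace FibAux

open Set Function

lemma fibS_one_le : ∀ n, 1 ≤ fibS n := by
  have h : ∀ n, 1 ≤ fibS n ∧ 1 ≤ fibS (n + 1) := by
    intro n
    induction n with
    | zero => exact ⟨le_refl 1, by norm_num [fibS]⟩
    | succ k ih =>
      refine ⟨ih.2, ?_⟩
      have h1 := ih.1
      have h2 := ih.2
      show 1 ≤ fibS (k + 2)
      rw [show fibS (k + 2) = fibS (k + 1) + fibS k from rfl]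
      omega
  exact fun n => (h n).1

lemma fibS_lt_succ : ∀ n, fibS n < fibS (n + 1) := by
  intro n
  cases n with
  | zero => norm_num [fibS]
  | succ k =>
    have := fibS_one_le k
    rw [show fibS (k + 2) = fibS (k + 1) + fibS k from rfl]
    omega

lemma fibS_mono : StrictMono fibS := strictMono_nat_of_lt_succ fibS_lt_succ

lemma fibS_gt : ∀ n, n < fibS n := by
  intro n
  induction n with
  | zero => norm_num [fibS]
  | succ k ih => have := fibS_lt_succ k; omega

lemma exists_fib_le (j : ℕ) (hj : 1 ≤ j) : ∃ i, fibS i ≤ j ∧ j < fibS (i + 1) := by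
  induction j with
  | zero => omega
  | succ k ih =>
    rcases Nat.eq_zero_or_pos k with hk | hk
    · subst hk
      exact ⟨0, by norm_num [fibS]⟩
    · obtain ⟨i, h1, h2⟩ := ih hk
      rcases lt_or_ge (k + 1) (fibS (i + 1)) with h | h
      · exact ⟨i, by omega, h⟩
      · have hkey : k + 1 = fibS (i + 1) := by omega
        exact ⟨i + 1, by omega, by rw [hkey]; exact fibS_lt_succ (i + 1)⟩

variable {f : ℝ → ℝ} {c q : ℝ}

lemma preimDist_nonneg (k : ℕ) : 0 ≤ preimDist f c k :=
  Real.sInf_nonneg (by rintro r ⟨y, _, rfl⟩; exact abs_nonneg _)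

lemma preimDist_le {k : ℕ} {x : ℝ} (hx : x ∈ Set.Icc (0:ℝ) 1) (hfx : f^[k] x = c) :
    preimDist f c k ≤ |x - c| :=
  csInf_le ⟨0, by rintro r ⟨y, _, rfl⟩; exact abs_nonneg _⟩ ⟨x, ⟨hx, hfx⟩, rfl⟩

lemma c_mem (hf : IsFibonacciMap f c) : c ∈ Set.Icc (0:ℝ) 1 :=
  ⟨(hf.1.2.2.2.2.1).1.le, (hf.1.2.2.2.2.1).2.le⟩

lemma mapsTo_iter (hf : IsFibonacciMap f c) (k : ℕ) :
    Set.MapsTo (f^[k]) (Set.Icc (0:ℝ) 1) (Set.Icc (0:ℝ) 1) :=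
  (hf.1.2.1).iterate k

lemma contOn_iter (hf : IsFibonacciMap f c) (k : ℕ) :
    ContinuousOn (f^[k]) (Set.Icc (0:ℝ) 1) := by
  induction k with
  | zero => simpa using continuousOn_id
  | succ n ih =>
    rw [Function.iterate_succ']
    exact hf.1.1.comp ih (mapsTo_iter hf n)

lemma delta_lt (hf : IsFibonacciMap f c) (i : ℕ) :
    preimDist f c (fibS (i + 1)) < preimDist f c (fibS i) :=
  (hf.2.2.2 i).1.2.2

lemma delta_anti (hf : IsFibonacciMap f c) {i m : ℕ} (h : i ≤ m) :
    preimDist f c (fibS m) ≤ preimDist f c (fibS i) := by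
  induction m with
  | zero => interval_cases i; exact le_refl _
  | succ k ih =>
    rcases Nat.lt_or_ge i (k + 1) with h' | h'
    · exact le_trans (delta_lt hf k).le (ih (by omega))
    · have : i = k + 1 := by omega
      subst this; exact le_refl _

lemma delta_pos (hf : IsFibonacciMap f c) (i : ℕ) : 0 < preimDist f c (fibS i) :=
  (preimDist_nonneg _).trans_lt (delta_lt hf i)

lemma fact1 (hf : IsFibonacciMap f c) {j : ℕ} (hj : 1 ≤ j) {x : ℝ}
    (hx : x ∈ Set.Icc (0:ℝ) 1) (hfx : f^[j] x = c) {m : ℕ} (hjm : j < fibS (m + 1)) :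
    preimDist f c (fibS m) ≤ |x - c| := by
  obtain ⟨i, hi1, hi2⟩ := exists_fib_le j hj
  have him : i ≤ m := by
    have h1 : fibS i < fibS (m + 1) := by omega
    have := fibS_mono.lt_iff_lt (a := i) (b := m + 1)
    omega
  have hle : preimDist f c (fibS i) ≤ preimDist f c j := by
    by_contra h
    push_neg at h
    have hmem : j ∈ {k | fibS i ≤ k ∧
        ({x | x ∈ Set.Icc (0:ℝ) 1 ∧ f^[k] x = c}).Nonempty ∧
        preimDist f c k < preimDist f c (fibS i)} := ⟨hi1, ⟨x, hx, hfx⟩, h⟩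
    have := (hf.2.2.2 i).2 hmem
    omega
  calc preimDist f c (fibS m) ≤ preimDist f c (fibS i) := delta_anti hf him
    _ ≤ preimDist f c j := hle
    _ ≤ |x - c| := preimDist_le hx hfx

lemma iterate_c_ne (hf : IsFibonacciMap f c) {j : ℕ} (hj : 1 ≤ j) : f^[j] c ≠ c := by
  intro h
  have h1 := fact1 hf hj (c_mem hf) h (m := j) (by have := fibS_gt j; have := fibS_lt_succ j; omega)
  simp only [sub_self, abs_zero] at h1
  exact absurd h1 (not_le.2 (delta_pos hf j))


lemma abs_le_of_mem_uIcc {y z c : ℝ} (hy : y ∈ Set.uIcc z c) : |y - c| ≤ |z - c| := by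
  rcases le_total z c with h | h
  · rw [Set.uIcc_of_le h] at hy
    rw [abs_of_nonpos (by linarith [hy.2]), abs_of_nonpos (by linarith)]
    linarith [hy.1]
  · rw [Set.uIcc_of_ge h] at hy
    rw [abs_of_nonneg (by linarith [hy.1]), abs_of_nonneg (by linarith)]
    linarith [hy.2]

lemma mono_or_anti (hf : IsFibonacciMap f c) {m : ℕ} {a : ℝ} (ha : a ∈ Set.Icc (0:ℝ) 1)
    (hda : |a - c| ≤ preimDist f c (fibS m)) :
    ∀ j, j ≤ fibS (m + 1) →
      StrictMonoOn (f^[j]) (Set.uIcc a c) ∨ StrictAntiOn (f^[j]) (Set.uIcc a c) := by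
  have hc01 : c ∈ Set.Icc (0:ℝ) 1 := c_mem hf
  have hJ : Set.uIcc a c ⊆ Set.Icc (0:ℝ) 1 := Set.ordConnected_Icc.uIcc_subset ha hc01
  intro j
  induction j with
  | zero => intro _; left; intro x _ y _ h; simpa using h
  | succ n ih =>
    intro hn1
    have hih := ih (by omega)
    have hsplit : (∀ x ∈ Set.uIcc a c, f^[n] x ≤ c) ∨ (∀ x ∈ Set.uIcc a c, c ≤ f^[n] x) := by
      by_contra hcon
      push_neg at hcon
      obtain ⟨⟨x₂, hx₂, h2⟩, ⟨x₁, hx₁, h1⟩⟩ := hcon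
      have hcontJ : ContinuousOn (f^[n]) (Set.uIcc x₁ x₂) :=
        (contOn_iter hf n).mono ((Set.uIcc_subset_uIcc hx₁ hx₂).trans hJ)
      have hcmem : c ∈ Set.uIcc (f^[n] x₁) (f^[n] x₂) := by
        rw [Set.mem_uIcc]; exact Or.inl ⟨h1.le, h2.le⟩
      obtain ⟨x, hxm, hxc⟩ := intermediate_value_uIcc hcontJ hcmem
      have hx1ne : x ≠ x₁ := by intro h; rw [h] at hxc; exact absurd hxc (ne_of_lt h1)
      have hx2ne : x ≠ x₂ := by intro h; rw [h] at hxc; exact (ne_of_gt h2) hxc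
      have hkey : |x - c| < |a - c| ∧ x ≠ c := by
        rcases le_total a c with hac | hac
        · rw [Set.uIcc_of_le hac] at hx₁ hx₂
          have hax : a < x ∧ x < c := by
            rw [Set.mem_uIcc] at hxm
            rcases hxm with ⟨hl, hr⟩ | ⟨hl, hr⟩
            · exact ⟨lt_of_le_of_lt hx₁.1 (lt_of_le_of_ne hl (Ne.symm hx1ne)),
                lt_of_lt_of_le (lt_of_le_of_ne hr hx2ne) hx₂.2⟩
            · exact ⟨lt_of_le_of_lt hx₂.1 (lt_of_le_of_ne hl (Ne.symm hx2ne)),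
                lt_of_lt_of_le (lt_of_le_of_ne hr hx1ne) hx₁.2⟩
          constructor
          · rw [abs_of_nonpos (by linarith [hax.2]), abs_of_nonpos (by linarith [hax.1, hax.2])]
            linarith [hax.1]
          · exact ne_of_lt hax.2
        · rw [Set.uIcc_of_ge hac] at hx₁ hx₂
          have hax : c < x ∧ x < a := by
            rw [Set.mem_uIcc] at hxm
            rcases hxm with ⟨hl, hr⟩ | ⟨hl, hr⟩
            · exact ⟨lt_of_le_of_lt hx₁.1 (lt_of_le_of_ne hl (Ne.symm hx1ne)),
                lt_of_lt_of_le (lt_of_le_of_ne hr hx2ne) hx₂.2⟩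
            · exact ⟨lt_of_le_of_lt hx₂.1 (lt_of_le_of_ne hl (Ne.symm hx2ne)),
                lt_of_lt_of_le (lt_of_le_of_ne hr hx1ne) hx₁.2⟩
          constructor
          · rw [abs_of_nonneg (by linarith [hax.1]), abs_of_nonneg (by linarith [hax.1, hax.2])]
            linarith [hax.2]
          · exact ne_of_gt hax.1
      rcases Nat.eq_zero_or_pos n with rfl | hn
      · simp only [Function.iterate_zero, id_eq] at hxc
        exact hkey.2 hxc
      · have hxmem01 : x ∈ Set.Icc (0:ℝ) 1 := hJ (Set.uIcc_subset_uIcc hx₁ hx₂ hxm)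
        have := fact1 hf hn hxmem01 hxc (m := m) (by omega)
        linarith [hkey.1]
    have hmaps' : ∀ x ∈ Set.uIcc a c, f^[n] x ∈ Set.Icc (0:ℝ) 1 :=
      fun x hx => mapsTo_iter hf n (hJ hx)
    rw [Function.iterate_succ']
    rcases hsplit with hle | hge
    · have hmt : Set.MapsTo (f^[n]) (Set.uIcc a c) (Set.Icc 0 c) :=
        fun x hx => ⟨(hmaps' x hx).1, hle x hx⟩
      rcases hih with hmn | han
      · exact Or.inl ((hf.1.2.2.2.2.2.1).comp hmn hmt)
      · exact Or.inr ((hf.1.2.2.2.2.2.1).comp_strictAntiOn han hmt)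
    · have hmt : Set.MapsTo (f^[n]) (Set.uIcc a c) (Set.Icc c 1) :=
        fun x hx => ⟨hge x hx, (hmaps' x hx).2⟩
      rcases hih with hmn | han
      · exact Or.inr ((hf.1.2.2.2.2.2.2).comp_strictMonoOn hmn hmt)
      · exact Or.inl ((hf.1.2.2.2.2.2.2).comp han hmt)

lemma exists_min (hf : IsFibonacciMap f c) {k : ℕ}
    (hne : {x | x ∈ Set.Icc (0:ℝ) 1 ∧ f^[k] x = c}.Nonempty) :
    ∃ z, z ∈ Set.Icc (0:ℝ) 1 ∧ f^[k] z = c ∧ |z - c| = preimDist f c k := by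
  set K := {x | x ∈ Set.Icc (0:ℝ) 1 ∧ f^[k] x = c} with hK
  have hsub : K ⊆ Set.Icc 0 1 := fun x hx => hx.1
  have hclosed : IsClosed K := by
    have hKeq : K = Set.Icc (0:ℝ) 1 ∩ f^[k] ⁻¹' {c} := by
      ext x; simp [hK, Set.mem_setOf_eq]
    rw [hKeq]
    exact (contOn_iter hf k).preimage_isClosed_of_isClosed isClosed_Icc isClosed_singleton
  have hcpt : IsCompact K := isCompact_Icc.of_isClosed_subset hclosed hsub
  obtain ⟨z, hzK, hzmin⟩ := hcpt.exists_isMinOn hne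
    ((continuous_id.sub continuous_const).abs.continuousOn (s := K))
  refine ⟨z, hzK.1, hzK.2, le_antisymm ?_ (preimDist_le hzK.1 hzK.2)⟩
  exact le_csInf (hne.image _) (by rintro r ⟨y, hy, rfl⟩; exact hzmin hy)

lemma reflect (hf : IsFibonacciMap f c) {k : ℕ} {z : ℝ} (hz : z ∈ Set.Icc (0:ℝ) 1)
    (hzk : f^[k + 1] z = c) (hd : |z - c| < min c (1 - c)) :
    (2 * c - z) ∈ Set.Icc (0:ℝ) 1 ∧ f^[k + 1] (2 * c - z) = c := by
  have habs := abs_lt.1 hd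
  have hmc := min_le_left c (1 - c)
  have hm1 := min_le_right c (1 - c)
  have h1 : 2 * c - z ∈ Set.Icc (0:ℝ) 1 := by
    constructor <;> [linarith [habs.2]; linarith [habs.1]]
  have h2 : f (2 * c - z) = f z := hf.2.1 z hz h1
  exact ⟨h1, by rw [Function.iterate_succ_apply, h2, ← Function.iterate_succ_apply, hzk]⟩

section Q
variable (hf : IsFibonacciMap f c) (hq : f q = q) (hqI : q ∈ Set.Ioo c 1)
include hf hq hqI

lemma fc_gt_q : q < f c := by
  obtain ⟨hcont, hmaps, hf0, hf1, hcIoo, hmono, hanti⟩ := hf.1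
  have := hanti ⟨le_refl c, hcIoo.2.le⟩ ⟨hqI.1.le, hqI.2.le⟩ hqI.1
  rw [hq] at this; exact this

lemma zl_exists : ∃ z, z ∈ Set.Icc (0:ℝ) 1 ∧ f z = c ∧ 0 < z ∧ z < c := by
  have hfcq := fc_gt_q hf hq hqI
  obtain ⟨hcont, hmaps, hf0, hf1, hcIoo, hmono, hanti⟩ := hf.1
  have hIVT := intermediate_value_Icc hcIoo.1.le
    (hcont.mono (Set.Icc_subset_Icc le_rfl hcIoo.2.le))
  have hcmem : c ∈ Set.Icc (f 0) (f c) := by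
    rw [hf0]; exact ⟨hcIoo.1.le, le_trans hqI.1.le hfcq.le⟩
  obtain ⟨z, hz, hzc⟩ := hIVT hcmem
  have hz0 : 0 < z := by
    rcases eq_or_lt_of_le hz.1 with h | h
    · exfalso; rw [← h, hf0] at hzc; exact absurd hzc.symm (ne_of_gt hcIoo.1)
    · exact h
  have hzc' : z < c := by
    rcases eq_or_lt_of_le hz.2 with h | h
    · exfalso; rw [h] at hzc; rw [hzc] at hfcq; exact absurd hfcq (not_lt.2 hqI.1.le)
    · exact h
  exact ⟨z, ⟨hz.1, le_trans hz.2 hcIoo.2.le⟩, hzc, hz0, hzc'⟩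

lemma zr_exists : ∃ z, z ∈ Set.Icc (0:ℝ) 1 ∧ f z = c ∧ q < z ∧ z < 1 := by
  have hfcq := fc_gt_q hf hq hqI
  obtain ⟨hcont, hmaps, hf0, hf1, hcIoo, hmono, hanti⟩ := hf.1
  have hIVT := intermediate_value_Icc' hcIoo.2.le
    (hcont.mono (Set.Icc_subset_Icc hcIoo.1.le le_rfl))
  have hcmem : c ∈ Set.Icc (f 1) (f c) := by
    rw [hf1]; exact ⟨hcIoo.1.le, le_trans hqI.1.le hfcq.le⟩
  obtain ⟨z, hz, hzc⟩ := hIVT hcmem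
  have hzq : q < z := by
    by_contra hcon
    push_neg at hcon
    rcases eq_or_lt_of_le hcon with h | h
    · rw [h, hq] at hzc; exact absurd hzc (ne_of_gt hqI.1)
    · have := hanti hz ⟨hqI.1.le, hqI.2.le⟩ h
      rw [hq, hzc] at this
      exact absurd this (not_lt.2 hqI.1.le)
  have hz1 : z < 1 := by
    rcases eq_or_lt_of_le hz.2 with h | h
    · exfalso; rw [h, hf1] at hzc; exact absurd hzc.symm (ne_of_gt hcIoo.1)
    · exact h
  exact ⟨z, ⟨le_trans hcIoo.1.le hz.1, hz.2⟩, hzc, hzq, hz1⟩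

lemma pre_nonempty_one : {x | x ∈ Set.Icc (0:ℝ) 1 ∧ f^[1] x = c}.Nonempty := by
  obtain ⟨z, hz1, hz2, _, _⟩ := zl_exists hf hq hqI
  exact ⟨z, hz1, by simpa using hz2⟩

lemma pre_nonempty (i : ℕ) : {x | x ∈ Set.Icc (0:ℝ) 1 ∧ f^[fibS i] x = c}.Nonempty := by
  cases i with
  | zero => exact pre_nonempty_one hf hq hqI
  | succ n => exact (hf.2.2.2 n).1.2.1

lemma delta0_lt : preimDist f c 1 < min c (1 - c) := by
  obtain ⟨zl, hzl1, hzl2, hzl3, hzl4⟩ := zl_exists hf hq hqI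
  obtain ⟨zr, hzr1, hzr2, hzr3, hzr4⟩ := zr_exists hf hq hqI
  have hc := hf.1.2.2.2.2.1
  have h1 : preimDist f c 1 ≤ |zl - c| := preimDist_le hzl1 (by simpa using hzl2)
  have h2 : preimDist f c 1 ≤ |zr - c| := preimDist_le hzr1 (by simpa using hzr2)
  rw [abs_of_nonpos (by linarith)] at h1
  rw [abs_of_nonneg (by linarith [hc.1, hqI.1])] at h2
  exact lt_min (by linarith) (by linarith [hqI.1, hc.1])

lemma preimage_one (hqhat : 2 * c - q ∈ Set.Icc (0:ℝ) 1) :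
    ∀ x ∈ Set.Icc (0:ℝ) 1, f x = c → q - c ≤ |x - c| := by
  obtain ⟨zl, hzl1, hzl2, hzl3, hzl4⟩ := zl_exists hf hq hqI
  obtain ⟨zr, hzr1, hzr2, hzr3, hzr4⟩ := zr_exists hf hq hqI
  have hsym := hf.2.1
  obtain ⟨hcont, hmaps, hf0, hf1, hcIoo, hmono, hanti⟩ := hf.1
  have hq01 : q ∈ Set.Icc (0:ℝ) 1 := ⟨le_trans hcIoo.1.le hqI.1.le, hqI.2.le⟩
  have hfhat : f (2 * c - q) = q := by rw [hsym q hq01 hqhat, hq]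
  have hhatc : 2 * c - q ≤ c := by linarith [hqI.1]
  intro x hx hxc
  rcases le_total x c with h | h
  · have hxeq : x = zl :=
      hmono.injOn ⟨hx.1, h⟩ ⟨hzl3.le, hzl4.le⟩ (by rw [hxc, hzl2])
    have hzlhat : zl < 2 * c - q := by
      by_contra hcon
      push_neg at hcon
      rcases eq_or_lt_of_le hcon with heq | hlt
      · rw [heq] at hfhat; rw [hfhat] at hzl2
        exact absurd hzl2 (ne_of_gt hqI.1)
      · have := hmono ⟨hqhat.1, hhatc⟩ ⟨hzl3.le, hzl4.le⟩ hlt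
        rw [hfhat, hzl2] at this
        exact absurd this (not_lt.2 hqI.1.le)
    rw [hxeq, abs_of_nonpos (by linarith)]
    linarith
  · have hxeq : x = zr :=
      hanti.injOn ⟨h, hx.2⟩ ⟨(hqI.1.trans hzr3).le, hzr4.le⟩
        (by rw [hxc, hzr2])
    rw [hxeq, abs_of_nonneg (by linarith [hqI.1])]
    linarith

lemma d1_lt_c : f^[2] c < c := by
  obtain ⟨zl, hzl1, hzl2, hzl3, hzl4⟩ := zl_exists hf hq hqI
  obtain ⟨zr, hzr1, hzr2, hzr3, hzr4⟩ := zr_exists hf hq hqI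
  have hδ : preimDist f c (fibS 1) < preimDist f c (fibS 0) := delta_lt hf 0
  have hne : ((fun x => |x - c|) ''
      {x | x ∈ Set.Icc (0:ℝ) 1 ∧ f^[fibS 1] x = c}).Nonempty :=
    (pre_nonempty hf hq hqI 1).image _
  obtain ⟨r, ⟨z1, hz1m, rfl⟩, hrlt0⟩ := exists_lt_of_csInf_lt hne hδ
  obtain ⟨hz1I, hz1c⟩ := hz1m
  have hrlt : |z1 - c| < preimDist f c (fibS 0) := hrlt0
  have hz1c' : f (f z1) = c := by
    have : f^[fibS 1] z1 = f (f z1) := by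
      rw [show fibS 1 = 2 from rfl]
      simp [Function.iterate_succ_apply']
    rw [← this]; exact hz1c
  have hδ0l : preimDist f c (fibS 0) ≤ |zl - c| :=
    preimDist_le hzl1 (by rw [show fibS 0 = 1 from rfl]; simpa using hzl2)
  have hδ0r : preimDist f c (fibS 0) ≤ |zr - c| :=
    preimDist_le hzr1 (by rw [show fibS 0 = 1 from rfl]; simpa using hzr2)
  obtain ⟨hcont, hmaps, hf0, hf1, hcIoo, hmono, hanti⟩ := hf.1
  have hcq : c < q := hqI.1
  -- f z1 > c
  have hfz1 : c < f z1 := by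
    rcases le_total z1 c with h | h
    · have hzlz1 : zl < z1 := by
        rw [abs_of_nonpos (by linarith)] at hrlt
        rw [abs_of_nonpos (by linarith)] at hδ0l
        linarith
      have := hmono ⟨hzl3.le, hzl4.le⟩ ⟨by linarith, h⟩ hzlz1
      rw [hzl2] at this; exact this
    · have hz1zr : z1 < zr := by
        rw [abs_of_nonneg (by linarith)] at hrlt
        rw [abs_of_nonneg (by linarith [hcIoo.1])] at hδ0r
        linarith
      have := hanti ⟨h, hz1I.2⟩ ⟨by linarith [hcIoo.1], hzr4.le⟩ hz1zr
      rw [hzr2] at this; exact this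
  -- f z1 = zr
  have hfz1zr : f z1 = zr := by
    have hfz1I : f z1 ∈ Set.Icc (0:ℝ) 1 := hmaps hz1I
    exact hanti.injOn ⟨hfz1.le, hfz1I.2⟩ ⟨by linarith [hcIoo.1], hzr4.le⟩
      (by rw [hz1c', hzr2])
  -- f c > zr
  have hfc_gt : zr < f c := by
    have hz1nec : z1 ≠ c := by
      intro h; subst h
      exact iterate_c_ne hf (fibS_one_le 1) hz1c
    rcases lt_or_gt_of_ne hz1nec with h | h
    · have := hmono ⟨hz1I.1, h.le⟩ ⟨hcIoo.1.le, le_refl c⟩ h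
      rw [hfz1zr] at this; exact this
    · have := hanti ⟨le_refl c, hcIoo.2.le⟩ ⟨h.le, hz1I.2⟩ h
      rw [hfz1zr] at this; exact this
  -- conclude
  have hfcI : f c ∈ Set.Icc (0:ℝ) 1 := hmaps ⟨hcIoo.1.le, hcIoo.2.le⟩
  have : f (f c) < f zr := hanti ⟨by linarith [hcIoo.1], hzr4.le⟩
    ⟨by linarith [hcIoo.1], hfcI.2⟩ hfc_gt
  rw [hzr2] at this
  simpa [Function.iterate_succ_apply'] using this

lemma dist_d_gt (m : ℕ) : preimDist f c (fibS m) < |f^[fibS (m + 1)] c - c| := by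
  have hc01 := c_mem hf
  obtain ⟨z, hzI, hzc, hzd⟩ := exists_min hf (pre_nonempty hf hq hqI (m + 1))
  have hzpos : 0 < |z - c| := by rw [hzd]; exact delta_pos hf (m + 1)
  have hzledm : |z - c| ≤ preimDist f c (fibS m) := by
    rw [hzd]; exact (delta_lt hf m).le
  have hne : ((fun x => |x - c|) ''
      {x | x ∈ Set.Icc (0:ℝ) 1 ∧ f^[fibS (m + 2)] x = c}).Nonempty :=
    (pre_nonempty hf hq hqI (m + 2)).image _
  obtain ⟨r, ⟨w, ⟨hwI, hwc⟩, rfl⟩, hwlt0⟩ := exists_lt_of_csInf_lt hne (delta_lt hf (m + 1))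
  have hwlt : |w - c| < preimDist f c (fibS (m + 1)) := hwlt0
  have hwltz : |w - c| < |z - c| := by rw [hzd]; exact hwlt
  have hwmin : |w - c| < min c (1 - c) := by
    have h1 : preimDist f c (fibS (m + 1)) ≤ preimDist f c (fibS 0) :=
      delta_anti hf (by omega)
    have h2 : preimDist f c (fibS 0) < min c (1 - c) := by
      rw [show fibS 0 = 1 from rfl]; exact delta0_lt hf hq hqI
    linarith
  obtain ⟨w', hw'I, hw'c, hw'abs, hw'side⟩ :
      ∃ w', w' ∈ Set.Icc (0:ℝ) 1 ∧ f^[fibS (m + 2)] w' = c ∧ |w' - c| = |w - c| ∧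
        0 ≤ (w' - c) * (z - c) := by
    rcases le_or_gt 0 ((w - c) * (z - c)) with hs | hs
    · exact ⟨w, hwI, hwc, rfl, hs⟩
    · obtain ⟨k, hk⟩ : ∃ k, fibS (m + 2) = k + 1 :=
        ⟨fibS (m + 2) - 1, by have := fibS_one_le (m + 2); omega⟩
      rw [hk] at hwc
      obtain ⟨h1, h2⟩ := reflect hf hwI hwc hwmin
      refine ⟨2 * c - w, h1, by rw [hk]; exact h2,
        by rw [show 2 * c - w - c = -(w - c) by ring, abs_neg], by nlinarith⟩
  have hw'ltz : |w' - c| < |z - c| := by rw [hw'abs]; exact hwltz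
  have hznec : z ≠ c := by intro h; rw [h] at hzpos; simp at hzpos
  have hw'mem : w' ∈ Set.uIcc z c := by
    rcases lt_or_gt_of_ne hznec with h | h
    · rw [Set.uIcc_of_le h.le]
      have hwcle : w' ≤ c := by nlinarith
      have habs1 : |w' - c| = c - w' := by rw [abs_of_nonpos (by linarith : w' - c ≤ 0)]; ring
      have habs2 : |z - c| = c - z := by rw [abs_of_nonpos (by linarith : z - c ≤ 0)]; ring
      exact ⟨by linarith, hwcle⟩
    · rw [Set.uIcc_of_ge h.le]
      have hwcge : c ≤ w' := by nlinarith
      have habs1 : |w' - c| = w' - c := abs_of_nonneg (by linarith)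
      have habs2 : |z - c| = z - c := abs_of_nonneg (by linarith)
      exact ⟨hwcge, by linarith⟩
  have hmoa := mono_or_anti hf hzI hzledm (fibS (m + 1)) le_rfl
  have hvc : f^[fibS m] (f^[fibS (m + 1)] w') = c := by
    rw [← Function.iterate_add_apply,
      show fibS m + fibS (m + 1) = fibS (m + 2) from by rw [Nat.add_comm]; rfl, hw'c]
  have hvI : f^[fibS (m + 1)] w' ∈ Set.Icc (0:ℝ) 1 := mapsTo_iter hf _ hw'I
  have hδv : preimDist f c (fibS m) ≤ |f^[fibS (m + 1)] w' - c| := preimDist_le hvI hvc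
  have hbet : (c ≤ f^[fibS (m + 1)] w' ∧ f^[fibS (m + 1)] w' ≤ f^[fibS (m + 1)] c) ∨
      (f^[fibS (m + 1)] c ≤ f^[fibS (m + 1)] w' ∧ f^[fibS (m + 1)] w' ≤ c) := by
    have hmz : z ∈ Set.uIcc z c := Set.left_mem_uIcc
    have hmc : c ∈ Set.uIcc z c := Set.right_mem_uIcc
    rcases hmoa with hmn | han
    · have hmono' := hmn.monotoneOn
      rcases lt_or_gt_of_ne hznec with h | h
      · have hb := hw'mem; rw [Set.uIcc_of_le h.le] at hb
        exact Or.inl ⟨hzc ▸ hmono' hmz hw'mem hb.1, hmono' hw'mem hmc hb.2⟩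
      · have hb := hw'mem; rw [Set.uIcc_of_ge h.le] at hb
        exact Or.inr ⟨hmono' hmc hw'mem hb.1, hzc ▸ hmono' hw'mem hmz hb.2⟩
    · have hanti' := han.antitoneOn
      rcases lt_or_gt_of_ne hznec with h | h
      · have hb := hw'mem; rw [Set.uIcc_of_le h.le] at hb
        exact Or.inr ⟨hanti' hw'mem hmc hb.2, hzc ▸ hanti' hmz hw'mem hb.1⟩
      · have hb := hw'mem; rw [Set.uIcc_of_ge h.le] at hb
        exact Or.inl ⟨hzc ▸ hanti' hw'mem hmz hb.2, hanti' hmc hw'mem hb.1⟩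
  have hvd : |f^[fibS (m + 1)] w' - c| ≤ |f^[fibS (m + 1)] c - c| := by
    rcases hbet with ⟨h1, h2⟩ | ⟨h1, h2⟩
    · rw [abs_of_nonneg (by linarith), abs_of_nonneg (by linarith)]; linarith
    · rw [abs_of_nonpos (by linarith), abs_of_nonpos (by linarith)]; linarith
  have hne' : preimDist f c (fibS m) ≠ |f^[fibS (m + 1)] c - c| := by
    intro heq
    have hveq : |f^[fibS (m + 1)] w' - c| = |f^[fibS (m + 1)] c - c| :=
      le_antisymm hvd (heq ▸ hδv)
    have hvd' : f^[fibS (m + 1)] w' = f^[fibS (m + 1)] c := by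
      rcases hbet with ⟨h1, h2⟩ | ⟨h1, h2⟩
      · rw [abs_of_nonneg (by linarith), abs_of_nonneg (by linarith)] at hveq; linarith
      · rw [abs_of_nonpos (by linarith), abs_of_nonpos (by linarith)] at hveq; linarith
    have hcc : f^[fibS (m + 2)] c = c := by
      rw [show fibS (m + 2) = fibS (m + 1) + fibS m from rfl, Nat.add_comm,
        Function.iterate_add_apply, ← hvd', hvc]
    exact iterate_c_ne hf (fibS_one_le _) hcc
  exact lt_of_le_of_ne (le_trans hδv hvd) hne'

lemma u_close (u : ℕ → ℝ) (hu1 : u 1 = 2 * c - q)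
    (hu : ∀ n, 1 ≤ n →
      u (n + 1) ∈ Set.Icc (0 : ℝ) 1 ∧
      f^[fibS n] (u (n + 1)) = u n ∧
      (u (n + 1) - c) * (f^[fibS (n + 1)] c - c) > 0 ∧
      ∀ y ∈ Set.Icc (0 : ℝ) 1, f^[fibS n] y = u n → |u (n + 1) - c| ≤ |y - c|) :
    ∀ m, |u (m + 1) - c| ≤ preimDist f c (fibS m) := by
  have hc01 := c_mem hf
  have hu1I : u 1 ∈ Set.Icc (0:ℝ) 1 := by
    have h2 := (hu 1 le_rfl).2.1
    rw [← h2]; exact mapsTo_iter hf _ (hu 1 le_rfl).1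
  have hqhat : 2 * c - q ∈ Set.Icc (0:ℝ) 1 := hu1 ▸ hu1I
  have hu1abs : |u 1 - c| = q - c := by
    rw [hu1, show 2 * c - q - c = -(q - c) by ring, abs_neg,
      abs_of_nonneg (by linarith [hqI.1])]
  intro m
  induction m with
  | zero =>
    rw [hu1abs, show fibS 0 = 1 from rfl]
    refine le_csInf ((pre_nonempty_one hf hq hqI).image _) ?_
    rintro r ⟨x, ⟨hx, hfx⟩, rfl⟩
    exact preimage_one hf hq hqI hqhat x hx (by simpa using hfx)
  | succ m ih =>
    have hside : (u (m + 1) - c) * (f^[fibS (m + 1)] c - c) > 0 := by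
      cases m with
      | zero =>
        have hd1 : f^[fibS 1] c < c := by
          rw [show fibS 1 = 2 from rfl]; exact d1_lt_c hf hq hqI
        have hneg : u 1 - c < 0 := by rw [hu1]; linarith [hqI.1]
        exact mul_pos_of_neg_of_neg hneg (by linarith)
      | succ k => exact (hu (k + 1) (by omega)).2.2.1
    have hdgt := dist_d_gt hf hq hqI m
    have humem : u (m + 1) ∈ Set.uIcc c (f^[fibS (m + 1)] c) := by
      rcases mul_pos_iff.1 hside with ⟨h1, h2⟩ | ⟨h1, h2⟩
      · have habs : |f^[fibS (m + 1)] c - c| = f^[fibS (m + 1)] c - c :=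
          abs_of_nonneg (by linarith)
        have h3 : u (m + 1) - c ≤ |u (m + 1) - c| := le_abs_self _
        rw [habs] at hdgt
        rw [Set.mem_uIcc]; exact Or.inl ⟨by linarith, by linarith⟩
      · have habs : |f^[fibS (m + 1)] c - c| = -(f^[fibS (m + 1)] c - c) :=
          abs_of_neg (by linarith)
        have h3 : -(u (m + 1) - c) ≤ |u (m + 1) - c| := neg_le_abs _
        rw [habs] at hdgt
        rw [Set.mem_uIcc]; exact Or.inr ⟨by linarith, by linarith⟩
    obtain ⟨z, hzI, hzc, hzd⟩ := exists_min hf (pre_nonempty hf hq hqI (m + 1))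
    have hcontg : ContinuousOn (f^[fibS (m + 1)]) (Set.uIcc z c) :=
      (contOn_iter hf _).mono (Set.ordConnected_Icc.uIcc_subset hzI hc01)
    have humem' : u (m + 1) ∈ Set.uIcc (f^[fibS (m + 1)] z) (f^[fibS (m + 1)] c) := by
      rw [hzc]; exact humem
    obtain ⟨y, hym, hgy⟩ := intermediate_value_uIcc hcontg humem'
    have hyI : y ∈ Set.Icc (0:ℝ) 1 := Set.ordConnected_Icc.uIcc_subset hzI hc01 hym
    calc |u (m + 1 + 1) - c| ≤ |y - c| := (hu (m + 1) (by omega)).2.2.2 y hyI hgy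
      _ ≤ |z - c| := abs_le_of_mem_uIcc hym
      _ = preimDist f c (fibS (m + 1)) := hzd

end Q

end FibAux

/-- For a Fibonacci map, for every `n ≥ 1` the iterate `f^{S_n}` is strictly monotone on
the interval between `u_n` and `c`. -/
theorem fibonacci_iterate_monotone_on_u_interval (f : ℝ → ℝ) (c q : ℝ) (u : ℕ → ℝ)
    (hf : IsFibonacciMap f c)
    (hq : f q = q) (hqI : q ∈ Set.Ioo c 1)
    (hu1 : u 1 = 2 * c - q)
    (hu : ∀ n, 1 ≤ n →
      u (n + 1) ∈ Set.Icc (0 : ℝ) 1 ∧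
      f^[fibS n] (u (n + 1)) = u n ∧
      (u (n + 1) - c) * (f^[fibS (n + 1)] c - c) > 0 ∧
      ∀ y ∈ Set.Icc (0 : ℝ) 1, f^[fibS n] y = u n → |u (n + 1) - c| ≤ |y - c|) :
    ∀ n, 1 ≤ n →
      StrictMonoOn (f^[fibS n]) (Set.uIcc (u n) c) ∨
      StrictAntiOn (f^[fibS n]) (Set.uIcc (u n) c) := by
  intro n hn
  obtain ⟨m, rfl⟩ : ∃ m, n = m + 1 := ⟨n - 1, by omega⟩
  have huc := FibAux.u_close hf hq hqI u hu1 hu m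
  have humem : u (m + 1) ∈ Set.Icc (0:ℝ) 1 := by
    cases m with
    | zero =>
      have h2 := (hu 1 le_rfl).2.1
      rw [← h2]; exact FibAux.mapsTo_iter hf _ (hu 1 le_rfl).1
    | succ k => exact (hu (k + 1) (by omega)).1
  exact FibAux.mono_or_anti hf humem huc (fibS (m + 1)) le_rfl
end
end

section
/- Let f be a Fibonacci map, let q be the orientation-reversing fixed point of f, let I^1 = (q̂, q), and let {I^k} be the principal nest of f starting from I^1. Then f^{S_k}(c) ∉ I^k for every k ≥ 1. -/
noncomputable section

/-- The entry domain `D(J) = {x : f^k x ∈ J for some k ≥ 1}`. -/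
def entryDom (f : ℝ → ℝ) (J : Set ℝ) : Set ℝ := {x | ∃ k, 1 ≤ k ∧ f^[k] x ∈ J}

/-- The first return time of `x` to `J` equals `m`: `f^[m] x ∈ J` and no earlier positive
iterate of `x` lies in `J`; thus the first return map satisfies `R_J x = f^[m] x`. -/
def ReturnTimeEq (f : ℝ → ℝ) (J : Set ℝ) (x : ℝ) (m : ℕ) : Prop :=
  1 ≤ m ∧ f^[m] x ∈ J ∧ ∀ k, 1 ≤ k → k < m → f^[k] x ∉ J

/-- `C` is a return domain of `J`: a connected component of `J ∩ D(J)`. -/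
def IsReturnDomain (f : ℝ → ℝ) (J C : Set ℝ) : Prop :=
  ∃ x ∈ J ∩ entryDom f J, C = connectedComponentIn (J ∩ entryDom f J) x

/-- The forward orbit of the critical point, `orb⁺(c) = {f^k c : k ≥ 1}`. -/
def posOrbit (f : ℝ → ℝ) (c : ℝ) : Set ℝ := {y | ∃ k, 1 ≤ k ∧ f^[k] c = y}


/-! ### Auxiliary development for the main theorem -/

namespace FibonacciAux

open Set

/-! #### Arithmetic of `fibS` -/

lemma fibS_pos (n : ℕ) : 0 < fibS n := by
  induction n using Nat.strong_induction_on with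
  | _ n ih =>
    match n with
    | 0 => simp [fibS]
    | 1 => simp [fibS]
    | n + 2 =>
      have h1 := ih (n+1) (by omega)
      have h2 := ih n (by omega)
      simp only [fibS]; omega

lemma fibS_zero : fibS 0 = 1 := rfl
lemma fibS_one : fibS 1 = 2 := rfl
lemma fibS_add_two (n : ℕ) : fibS (n + 2) = fibS (n + 1) + fibS n := rfl

lemma fibS_lt_succ (n : ℕ) : fibS n < fibS (n + 1) := by
  match n with
  | 0 => simp [fibS]
  | n + 1 =>
    have := fibS_pos n
    simp only [fibS_add_two]; omega

lemma fibS_strictMono : StrictMono fibS := strictMono_nat_of_lt_succ fibS_lt_succ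

lemma fibS_mono : Monotone fibS := fibS_strictMono.monotone

lemma fibS_ge (n : ℕ) : n + 1 ≤ fibS n := by
  induction n using Nat.strong_induction_on with
  | _ n ih =>
    match n with
    | 0 => simp [fibS]
    | 1 => simp [fibS]
    | n + 2 =>
      have h1 := ih (n+1) (by omega)
      have h2 := ih n (by omega)
      simp only [fibS_add_two]; omega

lemma fibS_floor {j : ℕ} (hj : 1 ≤ j) : ∃ m, fibS m ≤ j ∧ j < fibS (m + 1) := by
  classical
  have h0 : (fun m => fibS m ≤ j) 0 := by simpa [fibS_zero] using hj
  have hspec : fibS (Nat.findGreatest (fun m => fibS m ≤ j) j) ≤ j :=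
    Nat.findGreatest_spec (P := fun m => fibS m ≤ j) (n := j) (m := 0) (Nat.zero_le j) h0
  refine ⟨Nat.findGreatest (fun m => fibS m ≤ j) j, hspec, ?_⟩
  by_contra hcon
  push_neg at hcon
  have hmj : Nat.findGreatest (fun m => fibS m ≤ j) j + 1 ≤ j := by
    have := fibS_ge (Nat.findGreatest (fun m => fibS m ≤ j) j + 1)
    omega
  exact Nat.findGreatest_is_greatest (Nat.lt_succ_self _) hmj hcon

/-! #### Preimage sets -/

variable {f : ℝ → ℝ} {c q : ℝ}

/-- set of `n`-th preimages of `c` in `[0,1]` -/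
def preSet (f : ℝ → ℝ) (c : ℝ) (n : ℕ) : Set ℝ := {x | x ∈ Set.Icc (0:ℝ) 1 ∧ f^[n] x = c}

lemma preimDist_eq (n : ℕ) :
    preimDist f c n = sInf ((fun x => |x - c|) '' preSet f c n) := rfl

lemma mapsTo_iter (h : IsUnimodal f c) (n : ℕ) :
    MapsTo (f^[n]) (Icc (0:ℝ) 1) (Icc (0:ℝ) 1) := h.2.1.iterate n

lemma cont_iter (h : IsUnimodal f c) (n : ℕ) : ContinuousOn (f^[n]) (Icc (0:ℝ) 1) := by
  induction n with
  | zero => simpa using continuousOn_id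
  | succ n ih =>
    have : ContinuousOn (f^[n] ∘ f) (Icc (0:ℝ) 1) := ih.comp h.1 h.2.1
    simpa [Function.iterate_succ_apply, Function.comp] using this

lemma isCompact_preSet (h : IsUnimodal f c) (n : ℕ) : IsCompact (preSet f c n) := by
  have hclosed : IsClosed (Icc (0:ℝ) 1 ∩ (f^[n]) ⁻¹' {c}) :=
    (cont_iter h n).preimage_isClosed_of_isClosed isClosed_Icc isClosed_singleton
  have : preSet f c n = Icc (0:ℝ) 1 ∩ (f^[n]) ⁻¹' {c} := by
    ext x; simp [preSet]
  rw [this]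
  exact (isCompact_Icc).of_isClosed_subset hclosed inter_subset_left

lemma preimDist_nonneg (n : ℕ) : 0 ≤ preimDist f c n := by
  rw [preimDist_eq]
  exact Real.sInf_nonneg (by rintro y ⟨x, -, rfl⟩; exact abs_nonneg _)

lemma preimDist_le {n : ℕ} {x : ℝ} (hx : x ∈ preSet f c n) : preimDist f c n ≤ |x - c| := by
  rw [preimDist_eq]
  exact csInf_le ⟨0, by rintro y ⟨z, -, rfl⟩; exact abs_nonneg _⟩ ⟨x, hx, rfl⟩

lemma preimDist_attained (h : IsUnimodal f c) {n : ℕ} (hne : (preSet f c n).Nonempty) :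
    ∃ p ∈ preSet f c n, |p - c| = preimDist f c n := by
  have hK : IsCompact ((fun x => |x - c|) '' preSet f c n) :=
    (isCompact_preSet h n).image (by fun_prop)
  have hne' : ((fun x => |x - c|) '' preSet f c n).Nonempty := hne.image _
  have := hK.sInf_mem hne'
  rw [← preimDist_eq] at this
  obtain ⟨p, hp, hpe⟩ := this
  exact ⟨p, hp, hpe⟩


/-! #### Consequences of the cutting sequence condition -/

/-- abbreviation: distance to nearest `fibS m`-preimage -/
def dd (f : ℝ → ℝ) (c : ℝ) (m : ℕ) : ℝ := preimDist f c (fibS m)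

lemma cut_mem (hcut : IsCuttingSeq f c fibS) (i : ℕ) :
    fibS i ≤ fibS (i+1) ∧ (preSet f c (fibS (i+1))).Nonempty ∧ dd f c (i+1) < dd f c i :=
  (hcut.2 i).1

lemma dd_succ_lt (hcut : IsCuttingSeq f c fibS) (i : ℕ) : dd f c (i+1) < dd f c i :=
  (cut_mem hcut i).2.2

lemma preSet_fib_nonempty (hcut : IsCuttingSeq f c fibS) {m : ℕ} (hm : 1 ≤ m) :
    (preSet f c (fibS m)).Nonempty := by
  obtain ⟨i, rfl⟩ : ∃ i, m = i + 1 := ⟨m - 1, by omega⟩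
  exact (cut_mem hcut i).2.1

lemma dd_pos (hcut : IsCuttingSeq f c fibS) (m : ℕ) : 0 < dd f c m :=
  lt_of_le_of_lt (preimDist_nonneg _) (dd_succ_lt hcut m)

lemma dd_anti (hcut : IsCuttingSeq f c fibS) : ∀ {m n : ℕ}, m ≤ n → dd f c n ≤ dd f c m := by
  intro m n h
  induction n with
  | zero => simp_all
  | succ n ih =>
    rcases Nat.lt_or_ge m (n+1) with h' | h'
    · exact le_trans (le_of_lt (dd_succ_lt hcut n)) (ih (by omega))
    · have : m = n + 1 := by omega
      subst this; rfl

lemma dd_anti_strict (hcut : IsCuttingSeq f c fibS) {m n : ℕ} (h : m < n) :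
    dd f c n < dd f c m := by
  obtain ⟨i, rfl⟩ : ∃ i, n = i + 1 := ⟨n - 1, by omega⟩
  exact lt_of_le_of_lt (dd_anti hcut (by omega : m + 1 ≤ i + 1)) (dd_succ_lt hcut m)

/-- Key lower bound: a `j`-th preimage of `c` with `fibS m ≤ j < fibS (m+1)`
is at distance at least `dd m` from `c`. -/
lemma cut_lower (hcut : IsCuttingSeq f c fibS) {m j : ℕ} {x : ℝ}
    (h1 : fibS m ≤ j) (h2 : j < fibS (m+1)) (hx : x ∈ preSet f c j) :
    dd f c m ≤ |x - c| := by
  by_contra hcon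
  push_neg at hcon
  have hlt : preimDist f c j < dd f c m := lt_of_le_of_lt (preimDist_le hx) hcon
  have hmem : j ∈ {k | fibS m ≤ k ∧
      ({x | x ∈ Set.Icc (0 : ℝ) 1 ∧ f^[k] x = c}).Nonempty ∧
      preimDist f c k < preimDist f c (fibS m)} := ⟨h1, ⟨x, hx⟩, hlt⟩
  exact absurd ((hcut.2 m).2 hmem) (by omega)

/-- A preimage of order `j` with `1 ≤ j < fibS (K+1)` is at distance at least `dd K`. -/
lemma crit (hcut : IsCuttingSeq f c fibS) {K j : ℕ} {x : ℝ}
    (h1 : 1 ≤ j) (h2 : j < fibS (K+1)) (hx : x ∈ preSet f c j) :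
    dd f c K ≤ |x - c| := by
  obtain ⟨m, hm1, hm2⟩ := fibS_floor h1
  have hmK : m ≤ K := by
    by_contra hc
    push_neg at hc
    have : fibS (K+1) ≤ fibS m := fibS_mono hc
    omega
  exact le_trans (dd_anti hcut hmK) (cut_lower hcut hm1 hm2 hx)


/-! #### Geometric facts -/

lemma f_le_fc (hu : IsUnimodal f c) {x : ℝ} (hx : x ∈ Icc (0:ℝ) 1) : f x ≤ f c := by
  obtain ⟨hcont, hmap, hf0, hf1, hc, hmono, hanti⟩ := hu
  rcases le_total x c with h | h
  · exact hmono.monotoneOn ⟨hx.1, h⟩ ⟨le_of_lt hc.1, le_refl c⟩ h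
  · exact hanti.antitoneOn ⟨le_refl c, le_of_lt hc.2⟩ ⟨h, hx.2⟩ h

lemma fc_gt_q (hu : IsUnimodal f c) (hq : f q = q) (hqI : q ∈ Ioo c 1) : q < f c := by
  obtain ⟨hcont, hmap, hf0, hf1, hc, hmono, hanti⟩ := hu
  have := hanti ⟨le_refl c, le_of_lt hc.2⟩ ⟨le_of_lt hqI.1, le_of_lt hqI.2⟩ hqI.1
  rw [hq] at this; exact this

lemma c_pos (hu : IsUnimodal f c) : 0 < c := hu.2.2.2.2.1.1
lemma c_lt_one (hu : IsUnimodal f c) : c < 1 := hu.2.2.2.2.1.2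

lemma fc_gt_c (hu : IsUnimodal f c) (hq : f q = q) (hqI : q ∈ Ioo c 1) : c < f c :=
  lt_trans hqI.1 (fc_gt_q hu hq hqI)

lemma exists_a (hu : IsUnimodal f c) (hq : f q = q) (hqI : q ∈ Ioo c 1) :
    ∃ a, a ∈ Ioo (0:ℝ) c ∧ f a = c := by
  obtain ⟨hcont, hmap, hf0, hf1, hc, hmono, hanti⟩ := hu
  have hsub : Icc (0:ℝ) c ⊆ Icc (0:ℝ) 1 := Icc_subset_Icc (le_refl _) (le_of_lt hc.2)
  have hIVT := intermediate_value_Icc (le_of_lt hc.1) (hcont.mono hsub)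
  have hmem : c ∈ Icc (f 0) (f c) := by
    rw [hf0]
    exact ⟨le_of_lt hc.1, le_of_lt (fc_gt_c ⟨hcont, hmap, hf0, hf1, hc, hmono, hanti⟩ hq hqI)⟩
  obtain ⟨a, ha, hfa⟩ := hIVT hmem
  refine ⟨a, ⟨?_, ?_⟩, hfa⟩
  · rcases eq_or_lt_of_le ha.1 with h | h
    · exfalso; rw [← h] at hfa; rw [hf0] at hfa; exact absurd hfa.symm (ne_of_gt hc.1)
    · exact h
  · rcases eq_or_lt_of_le ha.2 with h | h
    · exfalso; rw [h] at hfa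
      exact absurd hfa (ne_of_gt (fc_gt_c ⟨hcont, hmap, hf0, hf1, hc, hmono, hanti⟩ hq hqI))
    · exact h

lemma exists_b (hu : IsUnimodal f c) (hq : f q = q) (hqI : q ∈ Ioo c 1) :
    ∃ b, b ∈ Ioo c 1 ∧ f b = c := by
  obtain ⟨hcont, hmap, hf0, hf1, hc, hmono, hanti⟩ := hu
  have hsub : Icc c 1 ⊆ Icc (0:ℝ) 1 := Icc_subset_Icc (le_of_lt hc.1) (le_refl _)
  have hIVT := intermediate_value_Icc' (le_of_lt hc.2) (hcont.mono hsub)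
  have hmem : c ∈ Icc (f 1) (f c) := by
    rw [hf1]
    exact ⟨le_of_lt hc.1, le_of_lt (fc_gt_c ⟨hcont, hmap, hf0, hf1, hc, hmono, hanti⟩ hq hqI)⟩
  obtain ⟨b, hb, hfb⟩ := hIVT hmem
  refine ⟨b, ⟨?_, ?_⟩, hfb⟩
  · rcases eq_or_lt_of_le hb.1 with h | h
    · exfalso; rw [← h] at hfb
      exact absurd hfb (ne_of_gt (fc_gt_c ⟨hcont, hmap, hf0, hf1, hc, hmono, hanti⟩ hq hqI))
    · exact h
  · rcases eq_or_lt_of_le hb.2 with h | h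
    · exfalso; rw [h] at hfb; rw [hf1] at hfb; exact absurd hfb.symm (ne_of_gt hc.1)
    · exact h

lemma mem_preSet_one (hu : IsUnimodal f c) {x : ℝ} (hx : x ∈ Icc (0:ℝ) 1) (hfx : f x = c) :
    x ∈ preSet f c 1 := ⟨hx, by simpa using hfx⟩

lemma d0_lt_c (hu : IsUnimodal f c) (hq : f q = q) (hqI : q ∈ Ioo c 1) : dd f c 0 < c := by
  obtain ⟨a, ha, hfa⟩ := exists_a hu hq hqI
  have hmem : a ∈ preSet f c (fibS 0) := by
    rw [fibS_zero]
    exact mem_preSet_one hu ⟨le_of_lt ha.1, le_of_lt (lt_trans ha.2 (c_lt_one hu))⟩ hfa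
  have := preimDist_le hmem
  have habs : |a - c| = c - a := by rw [abs_sub_comm]; exact abs_of_pos (by linarith [ha.2])
  rw [habs] at this
  unfold dd; linarith [ha.1]

lemma d0_lt_one_sub_c (hu : IsUnimodal f c) (hq : f q = q) (hqI : q ∈ Ioo c 1) :
    dd f c 0 < 1 - c := by
  obtain ⟨b, hb, hfb⟩ := exists_b hu hq hqI
  have hmem : b ∈ preSet f c (fibS 0) := by
    rw [fibS_zero]
    exact mem_preSet_one hu ⟨le_of_lt (lt_trans (c_pos hu) hb.1), le_of_lt hb.2⟩ hfb
  have := preimDist_le hmem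
  have habs : |b - c| = b - c := abs_of_pos (by linarith [hb.1])
  rw [habs] at this
  unfold dd; linarith [hb.2]

lemma q_sub_c_le_d0 (hu : IsUnimodal f c) (hsym : SymmetricAbout f c)
    (hq : f q = q) (hqI : q ∈ Ioo c 1) : q - c ≤ dd f c 0 := by
  obtain ⟨a, ha, hfa⟩ := exists_a hu hq hqI
  have hane : ((fun x => |x - c|) '' preSet f c (fibS 0)).Nonempty := by
    refine ⟨|a - c|, a, ?_, rfl⟩
    rw [fibS_zero]
    exact mem_preSet_one hu ⟨le_of_lt ha.1, le_of_lt (lt_trans ha.2 (c_lt_one hu))⟩ hfa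
  rw [dd, preimDist_eq]
  apply le_csInf hane
  rintro y ⟨x, hx, rfl⟩
  rw [fibS_zero] at hx
  obtain ⟨hx01, hfx⟩ := hx
  simp only [Function.iterate_one] at hfx
  obtain ⟨hcont, hmap, hf0, hf1, hc, hmono, hanti⟩ := hu
  rcases lt_trichotomy x c with hxc | hxc | hxc
  · -- x < c : show x ≤ 2c - q
    have hx2 : x ≤ 2*c - q := by
      by_contra hcon
      push_neg at hcon
      have hx' : 2*c - x ∈ Icc (0:ℝ) 1 := by
        constructor <;> nlinarith [hqI.1, hqI.2, hc.1, hc.2]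
      have hfx' : f (2*c - x) = c := by rw [hsym x hx01 hx', hfx]
      have h1 : c < 2*c - x := by linarith
      have h2 : 2*c - x < q := by linarith
      have := hanti ⟨le_of_lt h1, le_of_lt (lt_trans h2 hqI.2)⟩
        ⟨le_of_lt hqI.1, le_of_lt hqI.2⟩ h2
      rw [hfx', hq] at this
      linarith [hqI.1]
    show q - c ≤ |x - c|
    have : |x - c| = c - x := by rw [abs_sub_comm]; exact abs_of_pos (by linarith)
    rw [this]; linarith
  · exfalso
    rw [hxc] at hfx
    have := fc_gt_c ⟨hcont, hmap, hf0, hf1, hc, hmono, hanti⟩ hq hqI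
    linarith [hfx]
  · -- c < x : show q ≤ x
    have hx2 : q < x := by
      by_contra hcon
      push_neg at hcon
      rcases eq_or_lt_of_le hcon with h | h
      · rw [h] at hfx; rw [hq] at hfx; linarith [hqI.1]
      · have := hanti ⟨le_of_lt hxc, hx01.2⟩ ⟨le_of_lt hqI.1, le_of_lt hqI.2⟩ h
        rw [hfx, hq] at this
        linarith [hqI.1]
    show q - c ≤ |x - c|
    have : |x - c| = x - c := abs_of_pos (by linarith)
    rw [this]; linarith

lemma dd_lt_c (hu : IsUnimodal f c) (hcut : IsCuttingSeq f c fibS)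
    (hq : f q = q) (hqI : q ∈ Ioo c 1) {m : ℕ} (hm : 1 ≤ m) :
    dd f c m < c ∧ dd f c m < 1 - c := by
  have h1 : dd f c m < dd f c 0 := dd_anti_strict hcut hm
  exact ⟨lt_trans h1 (d0_lt_c hu hq hqI), lt_trans h1 (d0_lt_one_sub_c hu hq hqI)⟩

lemma symm_preSet (hsym : SymmetricAbout f c) {n : ℕ} (hn : 1 ≤ n) {p : ℝ}
    (hp : p ∈ preSet f c n) (hmem : 2*c - p ∈ Icc (0:ℝ) 1) : 2*c - p ∈ preSet f c n := by
  obtain ⟨n', rfl⟩ : ∃ n', n = n' + 1 := ⟨n - 1, by omega⟩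
  refine ⟨hmem, ?_⟩
  rw [Function.iterate_succ_apply, hsym p hp.1 hmem]
  rw [← Function.iterate_succ_apply]
  exact hp.2

/-- Both `c + dd m` and `c - dd m` are `fibS m`-preimages of `c`, for `m ≥ 1`. -/
lemma near (hu : IsUnimodal f c) (hsym : SymmetricAbout f c) (hcut : IsCuttingSeq f c fibS)
    (hq : f q = q) (hqI : q ∈ Ioo c 1) {m : ℕ} (hm : 1 ≤ m) :
    (c + dd f c m) ∈ preSet f c (fibS m) ∧ (c - dd f c m) ∈ preSet f c (fibS m) := by
  obtain ⟨p, hp, hpe⟩ := preimDist_attained hu (preSet_fib_nonempty hcut hm)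
  rw [show preimDist f c (fibS m) = dd f c m from rfl] at hpe
  have hdd := dd_lt_c hu hcut hq hqI hm
  have hpos := dd_pos hcut m
  have hfib1 : 1 ≤ fibS m := fibS_pos m
  have hmem1 : c + dd f c m ∈ Icc (0:ℝ) 1 := by
    constructor
    · linarith [c_pos hu]
    · linarith [hdd.2]
  have hmem2 : c - dd f c m ∈ Icc (0:ℝ) 1 := by
    constructor
    · linarith [hdd.1]
    · linarith [c_lt_one hu, hpos]
  rcases le_or_gt c p with h | h
  · have hpe' : p = c + dd f c m := by
      have : |p - c| = p - c := abs_of_nonneg (by linarith)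
      rw [this] at hpe; linarith
    rw [hpe'] at hp
    refine ⟨hp, ?_⟩
    have := symm_preSet hsym hfib1 hp (by rw [show 2*c - (c + dd f c m) = c - dd f c m by ring]; exact hmem2)
    rw [show 2*c - (c + dd f c m) = c - dd f c m by ring] at this
    exact this
  · have hpe' : p = c - dd f c m := by
      have : |p - c| = c - p := by rw [abs_sub_comm]; exact abs_of_pos (by linarith)
      rw [this] at hpe; linarith
    rw [hpe'] at hp
    refine ⟨?_, hp⟩
    have := symm_preSet hsym hfib1 hp (by rw [show 2*c - (c - dd f c m) = c + dd f c m by ring]; exact hmem1)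
    rw [show 2*c - (c - dd f c m) = c + dd f c m by ring] at this
    exact this


/-! #### Monotonicity of iterates on intervals free of preimages of `c` -/

lemma mono_or_anti (hu : IsUnimodal f c) :
    ∀ (n : ℕ) (u v : ℝ), 0 ≤ u → u ≤ v → v ≤ 1 →
    (∀ x, u < x → x < v → ∀ i, i < n → f^[i] x ≠ c) →
    StrictMonoOn (f^[n]) (Icc u v) ∨ StrictAntiOn (f^[n]) (Icc u v) := by
  intro n
  induction n with
  | zero =>
    intro u v _ _ _ _
    left; intro a _ b _ hab; simpa using hab
  | succ n ih =>
    intro u v hu0 huv hv1 hfree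
    have hcnot : ¬ (u < c ∧ c < v) := by
      rintro ⟨h1, h2⟩
      exact hfree c h1 h2 0 (Nat.succ_pos n) (by simp)
    have hcont1 : ContinuousOn f (Icc u v) := hu.1.mono (Icc_subset_Icc hu0 hv1)
    rcases le_or_gt v c with hvc | hcv
    · -- increasing branch : [u,v] ⊆ [0,c]
      have hmono : StrictMonoOn f (Icc u v) := hu.2.2.2.2.2.1.mono (Icc_subset_Icc hu0 hvc)
      have hfu : f u ∈ Icc (0:ℝ) 1 := hu.2.1 ⟨hu0, le_trans huv hv1⟩
      have hfv : f v ∈ Icc (0:ℝ) 1 := hu.2.1 ⟨le_trans hu0 huv, hv1⟩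
      have hfuv : f u ≤ f v := by
        rcases eq_or_lt_of_le huv with h | h
        · rw [h]
        · exact le_of_lt (hmono ⟨le_refl u, huv⟩ ⟨huv, le_refl v⟩ h)
      have hfree' : ∀ y, f u < y → y < f v → ∀ i, i < n → f^[i] y ≠ c := by
        intro y h1 h2 i hi
        obtain ⟨x, hx, rfl⟩ := intermediate_value_Ioo huv hcont1 ⟨h1, h2⟩
        rw [← Function.iterate_succ_apply]
        exact hfree x hx.1 hx.2 (i+1) (by omega)
      have hmemf : ∀ x ∈ Icc u v, f x ∈ Icc (f u) (f v) := by
        intro x hx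
        exact ⟨hmono.monotoneOn ⟨le_refl u, huv⟩ hx hx.1,
               hmono.monotoneOn hx ⟨huv, le_refl v⟩ hx.2⟩
      rcases ih (f u) (f v) hfu.1 hfuv hfv.2 hfree' with hM | hA
      · left
        intro x hx y hy hxy
        rw [Function.iterate_succ_apply, Function.iterate_succ_apply]
        exact hM (hmemf x hx) (hmemf y hy) (hmono hx hy hxy)
      · right
        intro x hx y hy hxy
        rw [Function.iterate_succ_apply, Function.iterate_succ_apply]
        exact hA (hmemf x hx) (hmemf y hy) (hmono hx hy hxy)
    · -- decreasing branch : [u,v] ⊆ [c,1]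
      have hcu : c ≤ u := by
        by_contra hcon
        push_neg at hcon
        exact hcnot ⟨hcon, hcv⟩
      have hanti : StrictAntiOn f (Icc u v) := hu.2.2.2.2.2.2.mono (Icc_subset_Icc hcu hv1)
      have hfu : f u ∈ Icc (0:ℝ) 1 := hu.2.1 ⟨hu0, le_trans huv hv1⟩
      have hfv : f v ∈ Icc (0:ℝ) 1 := hu.2.1 ⟨le_trans hu0 huv, hv1⟩
      have hfvu : f v ≤ f u := by
        rcases eq_or_lt_of_le huv with h | h
        · rw [h]
        · exact le_of_lt (hanti ⟨le_refl u, huv⟩ ⟨huv, le_refl v⟩ h)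
      have hfree' : ∀ y, f v < y → y < f u → ∀ i, i < n → f^[i] y ≠ c := by
        intro y h1 h2 i hi
        obtain ⟨x, hx, rfl⟩ := intermediate_value_Ioo' huv hcont1 ⟨h1, h2⟩
        rw [← Function.iterate_succ_apply]
        exact hfree x hx.1 hx.2 (i+1) (by omega)
      have hmemf : ∀ x ∈ Icc u v, f x ∈ Icc (f v) (f u) := by
        intro x hx
        exact ⟨hanti.antitoneOn hx ⟨huv, le_refl v⟩ hx.2,
               hanti.antitoneOn ⟨le_refl u, huv⟩ hx hx.1⟩
      rcases ih (f v) (f u) hfv.1 hfvu hfu.2 hfree' with hM | hA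
      · right
        intro x hx y hy hxy
        rw [Function.iterate_succ_apply, Function.iterate_succ_apply]
        exact hM (hmemf y hy) (hmemf x hx) (hanti hx hy hxy)
      · left
        intro x hx y hy hxy
        rw [Function.iterate_succ_apply, Function.iterate_succ_apply]
        exact hA (hmemf y hy) (hmemf x hx) (hanti hx hy hxy)

/-- If `x` is strictly inside the interval, its image is strictly between the endpoint images. -/
lemma iter_between (hu : IsUnimodal f c) {n : ℕ} {u v : ℝ} (hu0 : 0 ≤ u) (hv1 : v ≤ 1)
    (hfree : ∀ x, u < x → x < v → ∀ i, i < n → f^[i] x ≠ c)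
    {x : ℝ} (hx : x ∈ Ioo u v) :
    (f^[n] u < f^[n] x ∧ f^[n] x < f^[n] v) ∨ (f^[n] v < f^[n] x ∧ f^[n] x < f^[n] u) := by
  have huv : u ≤ v := le_of_lt (lt_trans hx.1 hx.2)
  rcases mono_or_anti hu n u v hu0 huv hv1 hfree with hM | hA
  · left
    exact ⟨hM ⟨le_refl u, huv⟩ ⟨le_of_lt hx.1, le_of_lt hx.2⟩ hx.1,
           hM ⟨le_of_lt hx.1, le_of_lt hx.2⟩ ⟨huv, le_refl v⟩ hx.2⟩
  · right
    exact ⟨hA ⟨le_of_lt hx.1, le_of_lt hx.2⟩ ⟨huv, le_refl v⟩ hx.2,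
           hA ⟨le_refl u, huv⟩ ⟨le_of_lt hx.1, le_of_lt hx.2⟩ hx.1⟩

/-- Intermediate value theorem for iterates on subintervals of `[0,1]`. -/
lemma iter_ivt (hu : IsUnimodal f c) {n : ℕ} {u v y : ℝ} (hu0 : 0 ≤ u) (huv : u ≤ v)
    (hv1 : v ≤ 1)
    (hy : y ∈ Ioo (f^[n] u) (f^[n] v) ∪ Ioo (f^[n] v) (f^[n] u)) :
    ∃ x ∈ Ioo u v, f^[n] x = y := by
  have hcont : ContinuousOn (f^[n]) (Icc u v) :=
    (cont_iter hu n).mono (Icc_subset_Icc hu0 hv1)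
  rcases hy with hy | hy
  · obtain ⟨x, hx, hxe⟩ := intermediate_value_Ioo huv hcont hy
    exact ⟨x, hx, hxe⟩
  · obtain ⟨x, hx, hxe⟩ := intermediate_value_Ioo' huv hcont hy
    exact ⟨x, hx, hxe⟩


/-! #### Key estimate (b): `f^[fibS (k+1)] c` is farther from `c` than `dd k`. -/

lemma keyB (hu : IsUnimodal f c) (hsym : SymmetricAbout f c) (hcut : IsCuttingSeq f c fibS)
    (hq : f q = q) (hqI : q ∈ Ioo c 1) (k : ℕ) :
    dd f c k < |f^[fibS (k+1)] c - c| := by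
  have hd1pos := dd_pos hcut (k+1)
  have hd2pos := dd_pos hcut (k+2)
  have hd21 : dd f c (k+2) < dd f c (k+1) := dd_succ_lt hcut (k+1)
  have hd1k : dd f c (k+1) < dd f c k := dd_succ_lt hcut k
  have hsmall1 := dd_lt_c hu hcut hq hqI (show 1 ≤ k+1 by omega)
  have hc0 := c_pos hu
  have hc1 := c_lt_one hu
  have hv1 : c + dd f c (k+1) ≤ 1 := by linarith [hsmall1.2]
  -- the interval [c, c + dd (k+1)] is free of preimages of order < fibS (k+1)
  have hfree : ∀ x, c < x → x < c + dd f c (k+1) → ∀ i, i < fibS (k+1) → f^[i] x ≠ c := by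
    intro x h1 h2 i hi hcon
    match i with
    | 0 => simp only [Function.iterate_zero, id_eq] at hcon; linarith
    | i + 1 =>
      have hxmem : x ∈ preSet f c (i+1) :=
        ⟨⟨by linarith, by linarith⟩, hcon⟩
      have := crit hcut (show 1 ≤ i + 1 by omega) hi hxmem
      rw [abs_of_pos (by linarith : (0:ℝ) < x - c)] at this
      linarith
  have hend : c + dd f c (k+1) ∈ preSet f c (fibS (k+1)) :=
    (near hu hsym hcut hq hqI (show 1 ≤ k+1 by omega)).1
  have hx1 : c + dd f c (k+2) ∈ Ioo c (c + dd f c (k+1)) :=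
    ⟨by linarith, by linarith⟩
  have hbet := iter_between hu (le_of_lt hc0) hv1 hfree hx1
  rw [hend.2] at hbet
  -- w is a fibS k preimage
  set w := f^[fibS (k+1)] (c + dd f c (k+2)) with hw
  have hx1mem : c + dd f c (k+2) ∈ Icc (0:ℝ) 1 := ⟨by linarith, by linarith⟩
  have hwmem : w ∈ Icc (0:ℝ) 1 := mapsTo_iter hu (fibS (k+1)) hx1mem
  have hwpre : w ∈ preSet f c (fibS k) := by
    refine ⟨hwmem, ?_⟩
    rw [hw, ← Function.iterate_add_apply]
    have : fibS k + fibS (k+1) = fibS (k+2) := by rw [fibS_add_two]; omega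
    rw [this]
    exact (near hu hsym hcut hq hqI (show 1 ≤ k+2 by omega)).1.2
  have hwd : dd f c k ≤ |w - c| := preimDist_le hwpre
  rcases hbet with ⟨h1, h2⟩ | ⟨h1, h2⟩
  · -- f^[fibS (k+1)] c < w < c
    have habs1 : |w - c| = c - w := by rw [abs_sub_comm]; exact abs_of_pos (by linarith)
    have habs2 : |f^[fibS (k+1)] c - c| = c - f^[fibS (k+1)] c := by
      rw [abs_sub_comm]; exact abs_of_pos (by linarith)
    rw [habs1] at hwd; rw [habs2]; linarith
  · -- c < w < f^[fibS (k+1)] c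
    have habs1 : |w - c| = w - c := abs_of_pos (by linarith)
    have habs2 : |f^[fibS (k+1)] c - c| = f^[fibS (k+1)] c - c := abs_of_pos (by linarith)
    rw [habs1] at hwd; rw [habs2]; linarith


/-! #### Key estimate (D): lower bound for all times in a Fibonacci window -/

lemma keyD (hu : IsUnimodal f c) (hsym : SymmetricAbout f c) (hcut : IsCuttingSeq f c fibS)
    (hq : f q = q) (hqI : q ∈ Ioo c 1) {m j : ℕ} (h1 : fibS m ≤ j) (h2 : j < fibS (m+1)) :
    dd f c m ≤ |f^[j] c - c| := by
  rcases eq_or_lt_of_le h1 with heq | hlt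
  · -- j = fibS m
    subst heq
    match m with
    | 0 =>
      -- show dd 0 ≤ |f^[1] c - c|
      obtain ⟨p, hp, hpe⟩ := preimDist_attained hu (preSet_fib_nonempty hcut (le_refl 1))
      rw [show preimDist f c (fibS 1) = dd f c 1 from rfl] at hpe
      obtain ⟨a, ha, hfa⟩ := exists_a hu hq hqI
      obtain ⟨b, hb, hfb⟩ := exists_b hu hq hqI
      have hc0 := c_pos hu
      have hc1 := c_lt_one hu
      have hamem : a ∈ preSet f c (fibS 0) :=
        mem_preSet_one hu ⟨le_of_lt ha.1, by linarith [ha.2]⟩ hfa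
      have hbmem : b ∈ preSet f c (fibS 0) :=
        mem_preSet_one hu ⟨by linarith [hb.1], le_of_lt hb.2⟩ hfb
      have had : dd f c 0 ≤ c - a := by
        have := preimDist_le hamem
        rwa [abs_sub_comm, abs_of_pos (by linarith [ha.2])] at this
      have hbd : dd f c 0 ≤ b - c := by
        have := preimDist_le hbmem
        rwa [abs_of_pos (by linarith [hb.1])] at this
      have hd10 : dd f c 1 < dd f c 0 := dd_succ_lt hcut 0
      have hap : a < p := by
        rcases le_or_gt p a with h | h
        · exfalso
          have : c - p ≤ |p - c| := by rw [abs_sub_comm]; exact le_abs_self _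
          linarith [hpe ▸ this]
        · exact h
      have hpb : p < b := by
        rcases le_or_gt b p with h | h
        · exfalso
          have : p - c ≤ |p - c| := le_abs_self _
          linarith [hpe ▸ this]
        · exact h
      -- f p > c
      have hfp : c < f p := by
        obtain ⟨hcont, hmap, hf0, hf1, hcc, hmono, hanti⟩ := hu
        rcases le_or_gt p c with h | h
        · have := hmono ⟨le_of_lt ha.1, le_of_lt ha.2⟩ ⟨le_trans (le_of_lt ha.1) (le_of_lt hap), h⟩ hap
          rwa [hfa] at this
        · have := hanti ⟨le_of_lt h, hp.1.2⟩ ⟨le_of_lt hb.1, le_of_lt hb.2⟩ hpb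
          rwa [hfb] at this
      have hfple : f p ≤ f c := f_le_fc hu hp.1
      have hfpmem : f p ∈ preSet f c (fibS 0) := by
        refine mem_preSet_one hu (hu.2.1 hp.1) ?_
        have := hp.2
        rw [show fibS 1 = 2 from rfl] at this
        rw [show (2:ℕ) = 1 + 1 from rfl, Function.iterate_add_apply] at this
        simpa using this
      have := preimDist_le hfpmem
      rw [abs_of_pos (by linarith : (0:ℝ) < f p - c)] at this
      have hfcc : c < f c := fc_gt_c hu hq hqI
      unfold dd at *
      simp only [show fibS 0 = 1 from rfl, show fibS 1 = 2 from rfl] at *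
      rw [Function.iterate_one, abs_of_pos (by linarith : (0:ℝ) < f c - c)]
      linarith
    | m'' + 1 =>
      have hkb := keyB hu hsym hcut hq hqI m''
      have : dd f c (m''+1) < dd f c m'' := dd_succ_lt hcut m''
      linarith
  · -- fibS m < j < fibS (m+1) : only possible for m ≥ 2
    match m with
    | 0 => rw [fibS_zero] at hlt; rw [fibS_one] at h2; omega
    | 1 => rw [fibS_one] at hlt; rw [show fibS 2 = 3 from rfl] at h2; omega
    | m'' + 2 =>
      set m := m'' + 2 with hmdef
      have hfib_m1 : fibS (m+1) = fibS m + fibS (m''+1) := by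
        have e1 : m + 1 = m'' + 1 + 2 := by omega
        have e2 : m = m'' + 1 + 1 := by omega
        rw [e1, e2]; exact fibS_add_two (m''+1)
      by_contra hcon
      push_neg at hcon
      have hdmpos := dd_pos hcut m
      have hdm1pos := dd_pos hcut (m+1)
      have hdm1lt : dd f c (m+1) < dd f c m := dd_succ_lt hcut m
      have hdmm'' : dd f c m < dd f c m'' := dd_anti_strict hcut (by omega)
      have hsmall := dd_lt_c hu hcut hq hqI (show 1 ≤ m+1 by omega)
      have hc0 := c_pos hu
      have hc1 := c_lt_one hu
      have hv1 : c + dd f c (m+1) ≤ 1 := by linarith [hsmall.2]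
      have hfree : ∀ x, c < x → x < c + dd f c (m+1) → ∀ i, i < j → f^[i] x ≠ c := by
        intro x hx1 hx2 i hi hcontra
        match i with
        | 0 => simp only [Function.iterate_zero, id_eq] at hcontra; linarith
        | i + 1 =>
          have hxmem : x ∈ preSet f c (i+1) := ⟨⟨by linarith, by linarith⟩, hcontra⟩
          have := crit hcut (show 1 ≤ i+1 by omega) (by omega : i + 1 < fibS (m+1)) hxmem
          rw [abs_of_pos (by linarith : (0:ℝ) < x - c)] at this
          linarith
      have hP : c + dd f c (m+1) ∈ preSet f c (fibS (m+1)) :=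
        (near hu hsym hcut hq hqI (show 1 ≤ m+1 by omega)).1
      set W := f^[j] (c + dd f c (m+1)) with hWdef
      set Cj := f^[j] c with hCjdef
      have hPmem : c + dd f c (m+1) ∈ Icc (0:ℝ) 1 := ⟨by linarith, hv1⟩
      have hWmem : W ∈ Icc (0:ℝ) 1 := mapsTo_iter hu j hPmem
      set r := fibS (m+1) - j with hrdef
      have hr1 : 1 ≤ r := by omega
      have hrlt : r < fibS (m''+1) := by omega
      have hWpre : W ∈ preSet f c r := by
        refine ⟨hWmem, ?_⟩
        rw [hWdef, ← Function.iterate_add_apply]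
        have : r + j = fibS (m+1) := by omega
        rw [this]
        exact hP.2
      have hWd : dd f c m'' ≤ |W - c| := crit hcut hr1 hrlt hWpre
      -- Cj ≠ c and W ≠ c
      have hCjne : Cj ≠ c := by
        intro h
        have hcmem : c ∈ preSet f c j := ⟨⟨le_of_lt hc0, le_of_lt hc1⟩, by rw [← hCjdef, h]⟩
        have := crit hcut (show 1 ≤ j by omega) (by omega : j < fibS (m+1)) hcmem
        simp at this
        linarith
      have hWne : W ≠ c := by
        intro h
        rw [h] at hWpre
        have := crit hcut hr1 hrlt hWpre
        simp at this
        linarith [dd_pos hcut m'']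
      have hnocross : ¬ ∃ x ∈ Ioo c (c + dd f c (m+1)), f^[j] x = c := by
        rintro ⟨x, hx, hxe⟩
        have hxmem : x ∈ preSet f c j := ⟨⟨by linarith [hx.1], by linarith [hx.2]⟩, hxe⟩
        have := crit hcut (show 1 ≤ j by omega) (by omega : j < fibS (m+1)) hxmem
        rw [abs_of_pos (by linarith [hx.1] : (0:ℝ) < x - c)] at this
        linarith [hx.2]
      -- same side
      have hside : (c < Cj ∧ c < W) ∨ (Cj < c ∧ W < c) := by
        rcases lt_trichotomy c Cj with hA | hA | hA
        · rcases lt_trichotomy c W with hB | hB | hB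
          · exact Or.inl ⟨hA, hB⟩
          · exact absurd hB.symm hWne
          · exfalso
            apply hnocross
            exact iter_ivt hu (le_of_lt hc0) (by linarith) hv1
              (Or.inr ⟨hB, hA⟩)
        · exact absurd hA.symm hCjne
        · rcases lt_trichotomy c W with hB | hB | hB
          · exfalso
            apply hnocross
            exact iter_ivt hu (le_of_lt hc0) (by linarith) hv1
              (Or.inl ⟨hA, hB⟩)
          · exact absurd hB.symm hWne
          · exact Or.inr ⟨hA, hB⟩
      rcases hside with ⟨hA, hB⟩ | ⟨hA, hB⟩
      · -- both right of c
        have hCjd : Cj - c < dd f c m := by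
          have : |Cj - c| = Cj - c := abs_of_pos (by linarith)
          rw [this] at hcon; exact hcon
        have hWd' : dd f c m'' ≤ W - c := by
          rwa [abs_of_pos (by linarith)] at hWd
        have hy0 : c + dd f c m ∈ Ioo Cj W := ⟨by linarith, by linarith⟩
        obtain ⟨x₀, hx₀, hx₀e⟩ := iter_ivt hu (le_of_lt hc0) (by linarith) hv1
          (Or.inl (show c + dd f c m ∈ Ioo (f^[j] c) (f^[j] (c + dd f c (m+1))) from hy0))
        have hy0pre : c + dd f c m ∈ preSet f c (fibS m) :=
          (near hu hsym hcut hq hqI (show 1 ≤ m by omega)).1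
        have hx₀pre : x₀ ∈ preSet f c (fibS m + j) := by
          refine ⟨⟨by linarith [hx₀.1], by linarith [hx₀.2]⟩, ?_⟩
          rw [Function.iterate_add_apply, hx₀e]
          exact hy0pre.2
        have hb1 : fibS (m+1) ≤ fibS m + j := by
          rw [hfib_m1]
          exact Nat.add_le_add_left
            (le_trans (fibS_mono (by omega : m''+1 ≤ m)) (le_of_lt hlt)) _
        have hb2 : fibS m + j < fibS (m+2) :=
          calc fibS m + j = j + fibS m := Nat.add_comm _ _
            _ < fibS (m+1) + fibS m := Nat.add_lt_add_right h2 _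
            _ = fibS (m+2) := (fibS_add_two m).symm
        have := cut_lower hcut hb1 hb2 hx₀pre
        rw [abs_of_pos (by linarith [hx₀.1] : (0:ℝ) < x₀ - c)] at this
        linarith [hx₀.2]
      · -- both left of c
        have hCjd : c - Cj < dd f c m := by
          have : |Cj - c| = c - Cj := by rw [abs_sub_comm]; exact abs_of_pos (by linarith)
          rw [this] at hcon; exact hcon
        have hWd' : dd f c m'' ≤ c - W := by
          rwa [abs_sub_comm, abs_of_pos (by linarith)] at hWd
        have hy0 : c - dd f c m ∈ Ioo W Cj := ⟨by linarith, by linarith⟩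
        obtain ⟨x₀, hx₀, hx₀e⟩ := iter_ivt hu (le_of_lt hc0) (by linarith) hv1
          (Or.inr (show c - dd f c m ∈ Ioo (f^[j] (c + dd f c (m+1))) (f^[j] c) from hy0))
        have hy0pre : c - dd f c m ∈ preSet f c (fibS m) :=
          (near hu hsym hcut hq hqI (show 1 ≤ m by omega)).2
        have hx₀pre : x₀ ∈ preSet f c (fibS m + j) := by
          refine ⟨⟨by linarith [hx₀.1], by linarith [hx₀.2]⟩, ?_⟩
          rw [Function.iterate_add_apply, hx₀e]
          exact hy0pre.2
        have hb1 : fibS (m+1) ≤ fibS m + j := by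
          rw [hfib_m1]
          exact Nat.add_le_add_left
            (le_trans (fibS_mono (by omega : m''+1 ≤ m)) (le_of_lt hlt)) _
        have hb2 : fibS m + j < fibS (m+2) :=
          calc fibS m + j = j + fibS m := Nat.add_comm _ _
            _ < fibS (m+1) + fibS m := Nat.add_lt_add_right h2 _
            _ = fibS (m+2) := (fibS_add_two m).symm
        have := cut_lower hcut hb1 hb2 hx₀pre
        rw [abs_of_pos (by linarith [hx₀.1] : (0:ℝ) < x₀ - c)] at this
        linarith [hx₀.2]

/-- Corollary: all iterates `f^[j] c` with `1 ≤ j < fibS (K+1)` are at distance `≥ dd K`. -/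
lemma critC (hu : IsUnimodal f c) (hsym : SymmetricAbout f c) (hcut : IsCuttingSeq f c fibS)
    (hq : f q = q) (hqI : q ∈ Ioo c 1) {K j : ℕ} (hj1 : 1 ≤ j) (hj2 : j < fibS (K+1)) :
    dd f c K ≤ |f^[j] c - c| := by
  obtain ⟨m, hm1, hm2⟩ := fibS_floor hj1
  have hmK : m ≤ K := by
    by_contra hc
    push_neg at hc
    have : fibS (K+1) ≤ fibS m := fibS_mono hc
    omega
  exact le_trans (dd_anti hcut hmK) (keyD hu hsym hcut hq hqI hm1 hm2)


/-! #### Orbit separation helper -/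

/-- If `ξ` lies strictly between `c` and the nearest `fibS (K+1)`-preimage `e`, then
all intermediate iterates `f^[i] ξ`, `1 ≤ i < fibS (K+1)`, stay outside the
`dd K`-ball around `c`. -/
lemma iter_far (hu : IsUnimodal f c) (hsym : SymmetricAbout f c) (hcut : IsCuttingSeq f c fibS)
    (hq : f q = q) (hqI : q ∈ Ioo c 1) {K i : ℕ} (hi1 : 1 ≤ i) (hi2 : i < fibS (K+1))
    {e ξ : ℝ} (he : e ∈ preSet f c (fibS (K+1)))
    (heside : e = c + dd f c (K+1) ∨ e = c - dd f c (K+1))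
    (hξ : ξ ∈ Ioo c e ∪ Ioo e c) :
    f^[i] ξ ∉ Ioo (c - dd f c K) (c + dd f c K) := by
  have hd1pos := dd_pos hcut (K+1)
  have hdKpos := dd_pos hcut K
  have hdlt : dd f c (K+1) < dd f c K := dd_succ_lt hcut K
  have hsmall := dd_lt_c hu hcut hq hqI (show 1 ≤ K+1 by omega)
  have hc0 := c_pos hu
  have hc1 := c_lt_one hu
  -- normalize to an interval [u, v] with {u,v} = {c, e}
  obtain ⟨u, v, huv, hucase, hξ', hu0, hv1, hwid⟩ :
      ∃ u v : ℝ, u < v ∧ ((u = c ∧ v = e) ∨ (u = e ∧ v = c)) ∧ ξ ∈ Ioo u v ∧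
        0 ≤ u ∧ v ≤ 1 ∧ ∀ x ∈ Ioo u v, |x - c| < dd f c (K+1) := by
    rcases heside with rfl | rfl
    · rcases hξ with hξ | hξ
      · refine ⟨c, c + dd f c (K+1), by linarith, Or.inl ⟨rfl, rfl⟩, hξ, by linarith, by
          linarith [hsmall.2], ?_⟩
        intro x hx
        rw [abs_of_pos (by linarith [hx.1] : (0:ℝ) < x - c)]
        linarith [hx.2]
      · exfalso; have := hξ.1; have := hξ.2; linarith [hξ.1, hξ.2]
    · rcases hξ with hξ | hξ
      · exfalso; linarith [hξ.1, hξ.2]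
      · refine ⟨c - dd f c (K+1), c, by linarith, Or.inr ⟨rfl, rfl⟩, hξ, by
          linarith [hsmall.1], by linarith, ?_⟩
        intro x hx
        rw [abs_sub_comm, abs_of_pos (by linarith [hx.2] : (0:ℝ) < c - x)]
        linarith [hx.1]
  -- the interval is free of preimages of order < i
  have hfree : ∀ x, u < x → x < v → ∀ i', i' < i → f^[i'] x ≠ c := by
    intro x h1 h2 i' hi' hcontra
    match i' with
    | 0 =>
      simp only [Function.iterate_zero, id_eq] at hcontra
      rcases hucase with ⟨rfl, rfl⟩ | ⟨rfl, rfl⟩ <;> linarith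
    | i' + 1 =>
      have hxmem : x ∈ preSet f c (i'+1) := ⟨⟨by linarith, by linarith⟩, hcontra⟩
      have := crit hcut (show 1 ≤ i'+1 by omega) (by omega : i'+1 < fibS (K+1)) hxmem
      have := hwid x ⟨h1, h2⟩
      linarith
  have hbet := iter_between hu hu0 hv1 hfree hξ'
  -- endpoint values are at distance ≥ dd K
  have hCi : dd f c K ≤ |f^[i] c - c| := critC hu hsym hcut hq hqI hi1 hi2
  have hPi : dd f c K ≤ |f^[i] e - c| := by
    have hemem : e ∈ Icc (0:ℝ) 1 := he.1
    have hPipre : f^[i] e ∈ preSet f c (fibS (K+1) - i) := by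
      refine ⟨mapsTo_iter hu i hemem, ?_⟩
      rw [← Function.iterate_add_apply]
      have : fibS (K+1) - i + i = fibS (K+1) := by omega
      rw [this]
      exact he.2
    exact crit hcut (by omega) (by omega) hPipre
  have hCine : f^[i] c ≠ c := by
    intro h; rw [h] at hCi; simp at hCi; linarith
  have hPine : f^[i] e ≠ c := by
    intro h; rw [h] at hPi; simp at hPi; linarith
  have hnc : ¬ ∃ x ∈ Ioo u v, f^[i] x = c := by
    rintro ⟨x, hx, hxe⟩
    have hxmem : x ∈ preSet f c i := ⟨⟨by linarith [hx.1], by linarith [hx.2]⟩, hxe⟩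
    have := crit hcut hi1 hi2 hxmem
    have := hwid x hx
    linarith
  -- the two endpoint values lie on the same side of c
  have hside : (c < f^[i] u ∧ c < f^[i] v) ∨ (f^[i] u < c ∧ f^[i] v < c) := by
    have hune : f^[i] u ≠ c := by
      rcases hucase with ⟨rfl, rfl⟩ | ⟨rfl, rfl⟩ <;> assumption
    have hvne : f^[i] v ≠ c := by
      rcases hucase with ⟨rfl, rfl⟩ | ⟨rfl, rfl⟩ <;> assumption
    rcases lt_trichotomy c (f^[i] u) with hA | hA | hA
    · rcases lt_trichotomy c (f^[i] v) with hB | hB | hB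
      · exact Or.inl ⟨hA, hB⟩
      · exact absurd hB.symm hvne
      · exfalso
        apply hnc
        exact iter_ivt hu hu0 (le_of_lt huv) hv1 (Or.inr ⟨hB, hA⟩)
    · exact absurd hA.symm hune
    · rcases lt_trichotomy c (f^[i] v) with hB | hB | hB
      · exfalso
        apply hnc
        exact iter_ivt hu hu0 (le_of_lt huv) hv1 (Or.inl ⟨hA, hB⟩)
      · exact absurd hB.symm hvne
      · exact Or.inr ⟨hA, hB⟩
  -- distances of endpoint values from c are ≥ dd K, on a common side
  have hud : dd f c K ≤ |f^[i] u - c| := by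
    rcases hucase with ⟨rfl, rfl⟩ | ⟨rfl, rfl⟩ <;> assumption
  have hvd : dd f c K ≤ |f^[i] v - c| := by
    rcases hucase with ⟨rfl, rfl⟩ | ⟨rfl, rfl⟩ <;> assumption
  intro hmem
  rcases hside with ⟨hA, hB⟩ | ⟨hA, hB⟩
  · rw [abs_of_pos (by linarith : (0:ℝ) < f^[i] u - c)] at hud
    rw [abs_of_pos (by linarith : (0:ℝ) < f^[i] v - c)] at hvd
    rcases hbet with ⟨h1, h2⟩ | ⟨h1, h2⟩ <;> linarith [hmem.2]
  · rw [abs_sub_comm, abs_of_pos (by linarith : (0:ℝ) < c - f^[i] u)] at hud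
    rw [abs_sub_comm, abs_of_pos (by linarith : (0:ℝ) < c - f^[i] v)] at hvd
    rcases hbet with ⟨h1, h2⟩ | ⟨h1, h2⟩ <;> linarith [hmem.1]


/-! #### The induction step for the principal nest -/

lemma step_lemma (hu : IsUnimodal f c) (hsym : SymmetricAbout f c)
    (hcut : IsCuttingSeq f c fibS) (hq : f q = q) (hqI : q ∈ Ioo c 1)
    (K : ℕ) (I1 I2 : Set ℝ)
    (hInv : I1 ⊆ Ioo (c - dd f c K) (c + dd f c K))
    (hcI2 : c ∈ I2)
    (hsub : I2 ⊆ I1 ∩ entryDom f I1)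
    (hpre : IsPreconnected I2)
    (ξp : ℝ) (hp1 : ξp ∈ Ioc c (c + dd f c K)) (hp2 : ξp ∈ Icc (0:ℝ) 1)
    (hp3 : ∀ i, 1 ≤ i → f^[i] ξp ∉ I1) (hp0 : ξp ∉ I1)
    (ξm : ℝ) (hm1 : ξm ∈ Ico (c - dd f c K) c) (hm2 : ξm ∈ Icc (0:ℝ) 1)
    (hm3 : ∀ i, 1 ≤ i → f^[i] ξm ∉ I1) (hm0 : ξm ∉ I1) :
    (I2 ⊆ Ioo (c - dd f c (K+1)) (c + dd f c (K+1))) ∧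
    ∃ ηp ηm : ℝ,
      ηp ∈ Ioc c (c + dd f c (K+1)) ∧ ηp ∈ Icc (0:ℝ) 1 ∧
      (∀ i, 1 ≤ i → f^[i] ηp ∉ I2) ∧ ηp ∉ I2 ∧
      ηm ∈ Ico (c - dd f c (K+1)) c ∧ ηm ∈ Icc (0:ℝ) 1 ∧
      (∀ i, 1 ≤ i → f^[i] ηm ∉ I2) ∧ ηm ∉ I2 := by
  have hd1pos := dd_pos hcut (K+1)
  have hdKpos := dd_pos hcut K
  have hdlt : dd f c (K+1) < dd f c K := dd_succ_lt hcut K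
  have hsmall := dd_lt_c hu hcut hq hqI (show 1 ≤ K+1 by omega)
  have hc0 := c_pos hu
  have hc1 := c_lt_one hu
  have hv1 : c + dd f c (K+1) ≤ 1 := by linarith [hsmall.2]
  have hu0 : 0 ≤ c - dd f c (K+1) := by linarith [hsmall.1]
  have hnear := near hu hsym hcut hq hqI (show 1 ≤ K+1 by omega)
  have hCk := keyB hu hsym hcut hq hqI K
  have hn1 : 1 ≤ fibS (K+1) := fibS_pos (K+1)
  -- First, construct a point ξ strictly inside (c - dd(K+1), c + dd(K+1)) \ {c}
  -- whose whole forward orbit (i ≥ 1) avoids I1.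
  have hmain : ∃ ξ : ℝ, (ξ ∈ Ioo c (c + dd f c (K+1)) ∪ Ioo (c - dd f c (K+1)) c) ∧
      (∀ i, 1 ≤ i → f^[i] ξ ∉ I1) := by
    rcases lt_or_gt_of_ne (show f^[fibS (K+1)] c ≠ c by
      intro h; rw [h] at hCk; simp at hCk; linarith) with hCneg | hCpos
    · -- f^[fibS (K+1)] c < c : target the left separating point ξm
      have hCkd : f^[fibS (K+1)] c < c - dd f c K := by
        have : |f^[fibS (K+1)] c - c| = c - f^[fibS (K+1)] c := by
          rw [abs_sub_comm]; exact abs_of_pos (by linarith)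
        rw [this] at hCk; linarith
      have httar : ξm ∈ Ioo (f^[fibS (K+1)] c) (f^[fibS (K+1)] (c - dd f c (K+1))) := by
        rw [hnear.2.2]
        exact ⟨by linarith [hm1.1], hm1.2⟩
      obtain ⟨ξ, hξ, hξe⟩ := iter_ivt hu hu0 (by linarith : c - dd f c (K+1) ≤ c)
        (le_of_lt hc1) (Or.inr httar)
      refine ⟨ξ, Or.inr hξ, ?_⟩
      intro i hi
      rcases Nat.lt_trichotomy i (fibS (K+1)) with hlt | heq | hgt
      · intro hmem
        exact iter_far hu hsym hcut hq hqI hi hlt hnear.2 (Or.inr rfl)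
          (Or.inr hξ) (hInv hmem)
      · rw [heq, hξe]; exact hm0
      · have hrep : f^[i] ξ = f^[i - fibS (K+1)] ξm := by
          rw [← hξe, ← Function.iterate_add_apply]
          congr 1
          omega
        rw [hrep]
        exact hm3 (i - fibS (K+1)) (by omega)
    · -- c < f^[fibS (K+1)] c : target the right separating point ξp
      have hCkd : c + dd f c K < f^[fibS (K+1)] c := by
        have : |f^[fibS (K+1)] c - c| = f^[fibS (K+1)] c - c := abs_of_pos (by linarith)
        rw [this] at hCk; linarith
      have httar : ξp ∈ Ioo (f^[fibS (K+1)] (c + dd f c (K+1))) (f^[fibS (K+1)] c) := by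
        rw [hnear.1.2]
        exact ⟨hp1.1, by linarith [hp1.2]⟩
      obtain ⟨ξ, hξ, hξe⟩ := iter_ivt hu (le_of_lt hc0)
        (by linarith : c ≤ c + dd f c (K+1)) hv1 (Or.inr httar)
      refine ⟨ξ, Or.inl hξ, ?_⟩
      intro i hi
      rcases Nat.lt_trichotomy i (fibS (K+1)) with hlt | heq | hgt
      · intro hmem
        exact iter_far hu hsym hcut hq hqI hi hlt hnear.1 (Or.inl rfl)
          (Or.inl hξ) (hInv hmem)
      · rw [heq, hξe]; exact hp0
      · have hrep : f^[i] ξ = f^[i - fibS (K+1)] ξp := by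
          rw [← hξe, ← Function.iterate_add_apply]
          congr 1
          omega
        rw [hrep]
        exact hp3 (i - fibS (K+1)) (by omega)
  obtain ⟨ξ, hξside, hξorb⟩ := hmain
  -- the mirrored point
  have hξmem : ξ ∈ Icc (0:ℝ) 1 := by
    rcases hξside with h | h
    · exact ⟨by linarith [h.1], by linarith [h.2]⟩
    · exact ⟨by linarith [h.1], by linarith [h.2]⟩
  have hmirmem : 2*c - ξ ∈ Icc (0:ℝ) 1 := by
    rcases hξside with h | h
    · exact ⟨by linarith [h.2], by linarith [h.1]⟩
    · exact ⟨by linarith [h.2], by linarith [h.1]⟩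
  have hmir_orb : ∀ i, 1 ≤ i → f^[i] (2*c - ξ) = f^[i] ξ := by
    intro i hi
    obtain ⟨i', rfl⟩ : ∃ i', i = i' + 1 := ⟨i - 1, by omega⟩
    rw [Function.iterate_succ_apply, Function.iterate_succ_apply, hsym ξ hξmem hmirmem]
  have hmirorb : ∀ i, 1 ≤ i → f^[i] (2*c - ξ) ∉ I1 := by
    intro i hi
    rw [hmir_orb i hi]
    exact hξorb i hi
  -- name the two points
  obtain ⟨P, M, hPmem, hMmem, hPIoo, hMIoo, hPorb, hMorb⟩ :
      ∃ P M : ℝ, P ∈ Icc (0:ℝ) 1 ∧ M ∈ Icc (0:ℝ) 1 ∧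
        P ∈ Ioo c (c + dd f c (K+1)) ∧ M ∈ Ioo (c - dd f c (K+1)) c ∧
        (∀ i, 1 ≤ i → f^[i] P ∉ I1) ∧ (∀ i, 1 ≤ i → f^[i] M ∉ I1) := by
    rcases hξside with h | h
    · exact ⟨ξ, 2*c - ξ, hξmem, hmirmem, h,
        ⟨by linarith [h.2], by linarith [h.1]⟩, hξorb, hmirorb⟩
    · exact ⟨2*c - ξ, ξ, hmirmem, hξmem,
        ⟨by linarith [h.2], by linarith [h.1]⟩, h, hmirorb, hξorb⟩
  have hPnotent : P ∉ entryDom f I1 := by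
    rintro ⟨i, hi, hmem⟩
    exact hPorb i hi hmem
  have hMnotent : M ∉ entryDom f I1 := by
    rintro ⟨i, hi, hmem⟩
    exact hMorb i hi hmem
  have hPnotI2 : P ∉ I2 := fun h => hPnotent (hsub h).2
  have hMnotI2 : M ∉ I2 := fun h => hMnotent (hsub h).2
  constructor
  · -- I2 ⊆ Ioo (c - dd (K+1)) (c + dd (K+1))
    intro y hy
    constructor
    · by_contra hcon
      push_neg at hcon
      have hyM : y < M := by linarith [hMIoo.1]
      have : M ∈ Icc y c := ⟨le_of_lt hyM, le_of_lt hMIoo.2⟩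
      exact hMnotI2 (hpre.Icc_subset hy hcI2 this)
    · by_contra hcon
      push_neg at hcon
      have hPy : P < y := by linarith [hPIoo.2]
      have : P ∈ Icc c y := ⟨le_of_lt hPIoo.1, le_of_lt hPy⟩
      exact hPnotI2 (hpre.Icc_subset hcI2 hy this)
  · refine ⟨P, M, ⟨hPIoo.1, le_of_lt hPIoo.2⟩, hPmem, ?_, hPnotI2,
      ⟨le_of_lt hMIoo.1, hMIoo.2⟩, hMmem, ?_, hMnotI2⟩
    · intro i hi hmem
      exact hPorb i hi ((hsub hmem).1)
    · intro i hi hmem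
      exact hMorb i hi ((hsub hmem).1)


/-! #### The nest invariant -/

lemma nest (hu : IsUnimodal f c) (hsym : SymmetricAbout f c) (hcut : IsCuttingSeq f c fibS)
    (hq : f q = q) (hqI : q ∈ Ioo c 1) (I : ℕ → Set ℝ)
    (hI1 : I 1 = Set.Ioo (2 * c - q) q)
    (hI : ∀ k, 1 ≤ k → c ∈ I (k + 1) ∧ IsReturnDomain f (I k) (I (k + 1))) :
    ∀ K : ℕ, (I (K+1) ⊆ Ioo (c - dd f c K) (c + dd f c K)) ∧
      ∃ ξp ξm : ℝ,
        ξp ∈ Ioc c (c + dd f c K) ∧ ξp ∈ Icc (0:ℝ) 1 ∧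
        (∀ i, 1 ≤ i → f^[i] ξp ∉ I (K+1)) ∧ ξp ∉ I (K+1) ∧
        ξm ∈ Ico (c - dd f c K) c ∧ ξm ∈ Icc (0:ℝ) 1 ∧
        (∀ i, 1 ≤ i → f^[i] ξm ∉ I (K+1)) ∧ ξm ∉ I (K+1) := by
  intro K
  induction K with
  | zero =>
    have hd0 := q_sub_c_le_d0 hu hsym hq hqI
    have hd0c := d0_lt_c hu hq hqI
    have hc0 := c_pos hu
    have hc1 := c_lt_one hu
    have hq0 : (0:ℝ) ≤ q := le_of_lt (lt_trans hc0 hqI.1)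
    have hq1 : q ≤ 1 := le_of_lt hqI.2
    have hqhat : 2*c - q ∈ Icc (0:ℝ) 1 := by
      constructor
      · linarith [hqI.1]
      · linarith [hqI.1]
    constructor
    · intro x hx
      rw [hI1] at hx
      constructor
      · have : (2:ℝ)*c - q = 2*c - q := rfl
        calc c - dd f c 0 ≤ c - (q - c) := by linarith
          _ = 2*c - q := by ring
          _ < x := hx.1
      · calc x < q := hx.2
          _ = c + (q - c) := by ring
          _ ≤ c + dd f c 0 := by linarith
    · refine ⟨q, 2*c - q, ⟨hqI.1, by linarith⟩, ⟨hq0, hq1⟩, ?_, ?_, ⟨by linarith, by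
        linarith [hqI.1]⟩, hqhat, ?_, ?_⟩
      · intro i _
        rw [Function.iterate_fixed hq i, hI1]
        exact fun h => lt_irrefl q h.2
      · rw [hI1]; exact fun h => lt_irrefl q h.2
      · intro i hi
        obtain ⟨i', rfl⟩ : ∃ i', i = i' + 1 := ⟨i - 1, by omega⟩
        rw [Function.iterate_succ_apply, hsym q ⟨hq0, hq1⟩ hqhat, hq,
          Function.iterate_fixed hq i', hI1]
        exact fun h => lt_irrefl q h.2
      · rw [hI1]; exact fun h => lt_irrefl _ h.1
  | succ K IH =>
    obtain ⟨hInv, ξp, ξm, hp1, hp2, hp3, hp0, hm1, hm2, hm3, hm0⟩ := IH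
    have hd := hI (K+1) (by omega)
    obtain ⟨x₀, hx₀, heq⟩ := hd.2
    have hsub : I (K+2) ⊆ I (K+1) ∩ entryDom f (I (K+1)) := by
      rw [heq]; exact connectedComponentIn_subset _ _
    have hpre : IsPreconnected (I (K+2)) := by
      rw [heq]; exact isPreconnected_connectedComponentIn
    exact step_lemma hu hsym hcut hq hqI K (I (K+1)) (I (K+2)) hInv hd.1 hsub hpre
      ξp hp1 hp2 hp3 hp0 ξm hm1 hm2 hm3 hm0

end FibonacciAux








/-- For a Fibonacci map with principal nest `{Iᵏ}` starting from `I¹ = (q̂, q)`,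
one has `f^{S_k}(c) ∉ Iᵏ` for every `k ≥ 1`. -/
theorem fibonacci_iterate_not_in_nest (f : ℝ → ℝ) (c q : ℝ) (I : ℕ → Set ℝ)
    (hf : IsFibonacciMap f c)
    (hq : f q = q) (hqI : q ∈ Set.Ioo c 1)
    (hI1 : I 1 = Set.Ioo (2 * c - q) q)
    (hI : ∀ k, 1 ≤ k → c ∈ I (k + 1) ∧ IsReturnDomain f (I k) (I (k + 1))) :
    ∀ k, 1 ≤ k → f^[fibS k] c ∉ I k := by
  obtain ⟨hu, hsym, hcut⟩ := hf
  intro k hk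
  obtain ⟨K, rfl⟩ : ∃ K, k = K + 1 := ⟨k - 1, by omega⟩
  have hInv := (FibonacciAux.nest hu hsym hcut hq hqI I hI1 hI K).1
  have hKB := FibonacciAux.keyB hu hsym hcut hq hqI K
  intro hmem
  have h2 := hInv hmem
  have : |f^[fibS (K+1)] c - c| < FibonacciAux.dd f c K :=
    abs_lt.mpr ⟨by linarith [h2.1], by linarith [h2.2]⟩
  linarith
end
end

section
/- Let f be a Fibonacci map. Then the forward critical orbit is contained in the union of the closed intervals with endpoints d_n and y_n: for every m ≥ 1 there exists n ≥ 0 such that f^m(c) lies in the closed interval with endpoints d_n = f^{S_n}(c) and y_n = f^{S_n+S_{n+2}}(c). Specifically, one may take n such that S_n is the leading summand of the Fibonacci sum expression of m. -/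
noncomputable section

/-- `l` is the Fibonacci sum expression of `m`: a nonempty list of indices
`k₁, k₂, …` with `k_{i+1} ≥ k_i + 2` for each `i`, with `S_{k₁} + S_{k₂} + ⋯ = m`.
The leading summand is `fibS n` where `l.head? = some n`. -/
def IsFibExpansion (l : List ℕ) (m : ℕ) : Prop :=
  l ≠ [] ∧ l.Chain' (fun a b => a + 2 ≤ b) ∧ (l.map fibS).sum = m

-- ## fibS basics

lemma fibS_add_two (n : ℕ) : fibS (n + 2) = fibS (n + 1) + fibS n := rfl

lemma fibS_pos : ∀ n, 0 < fibS n
  | 0 => one_pos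
  | 1 => two_pos
  | n + 2 => by rw [fibS_add_two]; exact Nat.add_pos_left (fibS_pos (n+1)) _

lemma fibS_lt_succ : ∀ n, fibS n < fibS (n + 1)
  | 0 => one_lt_two
  | n + 1 => by rw [fibS_add_two]; exact Nat.lt_add_of_pos_right (fibS_pos n)

lemma fibS_strictMono : StrictMono fibS := strictMono_nat_of_lt_succ fibS_lt_succ

lemma fibS_mono : Monotone fibS := fibS_strictMono.monotone

lemma one_le_fibS (n : ℕ) : 1 ≤ fibS n := fibS_pos n

lemma lt_fibS (n : ℕ) : n < fibS n := by
  induction n with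
  | zero => exact fibS_pos 0
  | succ k ih => have := fibS_lt_succ k; omega

section Main

variable {f : ℝ → ℝ} {c : ℝ}

-- components
lemma hcont (hf : IsFibonacciMap f c) : ContinuousOn f (Set.Icc 0 1) := hf.1.1
lemma hmaps (hf : IsFibonacciMap f c) : Set.MapsTo f (Set.Icc 0 1) (Set.Icc 0 1) := hf.1.2.1
lemma hf0 (hf : IsFibonacciMap f c) : f 0 = 0 := hf.1.2.2.1
lemma hf1 (hf : IsFibonacciMap f c) : f 1 = 0 := hf.1.2.2.2.1
lemma hcIoo (hf : IsFibonacciMap f c) : c ∈ Set.Ioo (0:ℝ) 1 := hf.1.2.2.2.2.1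
lemma hmonoL (hf : IsFibonacciMap f c) : StrictMonoOn f (Set.Icc 0 c) := hf.1.2.2.2.2.2.1
lemma hantiR (hf : IsFibonacciMap f c) : StrictAntiOn f (Set.Icc c 1) := hf.1.2.2.2.2.2.2
lemma hcut (hf : IsFibonacciMap f c) : IsCuttingSeq f c fibS := hf.2.2

variable (hf : IsFibonacciMap f c)
include hf

/-- the critical point is 1/2 -/
lemma c_eq_half : c = 1/2 := by
  have h0 := hcIoo hf
  rcases lt_trichotomy c (1/2) with h | h | h
  · exfalso
    have h2c : (2*c - 0) ∈ Set.Icc (0:ℝ) 1 := by constructor <;> [linarith [h0.1]; linarith]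
    have := hf.2.1 0 (by constructor <;> norm_num) h2c
    rw [hf0 hf] at this
    have h1 : f (2*c) > f 1 := by
      apply hantiR hf ⟨by linarith [h0.1], by linarith⟩ ⟨by linarith [h0.1], le_refl 1⟩
      linarith
    rw [hf1 hf] at h1
    simp only [sub_zero] at this
    linarith
  · exact h
  · exfalso
    have h2c : (2*c - 1) ∈ Set.Icc (0:ℝ) 1 := by constructor <;> [linarith; linarith [h0.2]]
    have := hf.2.1 1 (by constructor <;> norm_num) h2c
    rw [hf1 hf] at this
    have h1 : f (2*c-1) > f 0 := by
      apply hmonoL hf ⟨le_refl 0, by linarith [h0.1]⟩ ⟨by linarith, by linarith [h0.2]⟩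
      linarith
    rw [hf0 hf] at h1
    linarith

lemma c_mem : c ∈ Set.Icc (0:ℝ) 1 := ⟨(hcIoo hf).1.le, (hcIoo hf).2.le⟩

/-- symmetry: f (1 - x) = f x on [0,1] -/
lemma fsymm {x : ℝ} (hx : x ∈ Set.Icc (0:ℝ) 1) : f (1 - x) = f x := by
  have hc := c_eq_half hf
  have h1x : (1 - x) ∈ Set.Icc (0:ℝ) 1 := ⟨by linarith [hx.2], by linarith [hx.1]⟩
  have := hf.2.1 x hx (by rw [hc]; convert h1x using 2; ring)
  rw [hc] at this; convert this using 2 <;> ring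

lemma mapsTo_iter (k : ℕ) : Set.MapsTo (f^[k]) (Set.Icc 0 1) (Set.Icc 0 1) :=
  Set.MapsTo.iterate (hmaps hf) k

lemma cont_iter (k : ℕ) : ContinuousOn (f^[k]) (Set.Icc 0 1) := by
  induction k with
  | zero => simpa using continuousOn_id
  | succ n ih =>
    rw [Function.iterate_succ']
    exact (hcont hf).comp ih (mapsTo_iter hf n)

lemma iter_symm {x : ℝ} (hx : x ∈ Set.Icc (0:ℝ) 1) {k : ℕ} (hk : 1 ≤ k) :
    f^[k] (1 - x) = f^[k] x := by
  obtain ⟨k, rfl⟩ := Nat.exists_eq_add_of_le hk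
  rw [add_comm, Function.iterate_add_apply, Function.iterate_add_apply]
  simp only [Function.iterate_one]
  rw [fsymm hf hx]


-- ## preimage sets and distances

omit hf

/-- the set of exact k-th preimages of c in [0,1] -/
lemma preimDist_def (k : ℕ) :
    preimDist f c k = sInf ((fun x => |x - c|) '' {x | x ∈ Set.Icc (0:ℝ) 1 ∧ f^[k] x = c}) := rfl

lemma zeta_nonneg (k : ℕ) : 0 ≤ preimDist f c k := by
  apply Real.sInf_nonneg
  rintro x ⟨y, -, rfl⟩
  exact abs_nonneg _

lemma zeta_le {k : ℕ} {x : ℝ} (hx : x ∈ Set.Icc (0:ℝ) 1) (hfx : f^[k] x = c) :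
    preimDist f c k ≤ |x - c| := by
  apply csInf_le
  · exact ⟨0, by rintro y ⟨z, -, rfl⟩; exact abs_nonneg _⟩
  · exact ⟨x, ⟨hx, hfx⟩, rfl⟩

include hf

lemma zeta_attained {k : ℕ}
    (hne : ({x | x ∈ Set.Icc (0:ℝ) 1 ∧ f^[k] x = c}).Nonempty) :
    ∃ x ∈ Set.Icc (0:ℝ) 1, f^[k] x = c ∧ |x - c| = preimDist f c k := by
  set P : Set ℝ := {x | x ∈ Set.Icc (0:ℝ) 1 ∧ f^[k] x = c} with hP
  have hPsub : P ⊆ Set.Icc 0 1 := fun x hx => hx.1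
  have hclosed : IsClosed P := by
    have : P = Set.Icc (0:ℝ) 1 ∩ f^[k] ⁻¹' {c} := by
      ext x
      simp only [hP, Set.mem_setOf_eq, Set.mem_inter_iff, Set.mem_preimage,
        Set.mem_singleton_iff]
    rw [this]
    exact ContinuousOn.preimage_isClosed_of_isClosed (cont_iter hf k) isClosed_Icc
      isClosed_singleton
  have hcomp : IsCompact P := isCompact_Icc.of_isClosed_subset hclosed hPsub
  rcases hne with ⟨x0, hx0⟩
  have himg : IsCompact ((fun x => |x - c|) '' P) :=
    hcomp.image_of_continuousOn ((continuous_abs.comp (continuous_id.sub continuous_const)).continuousOn)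
  have hmem : sInf ((fun x => |x - c|) '' P) ∈ (fun x => |x - c|) '' P :=
    himg.sInf_mem ⟨_, ⟨x0, hx0, rfl⟩⟩
  rcases hmem with ⟨x, hxP, hxeq⟩
  exact ⟨x, hxP.1, hxP.2, hxeq⟩

lemma zeta_fib_mem (i : ℕ) :
    fibS i ≤ fibS (i+1) ∧
    ({x | x ∈ Set.Icc (0:ℝ) 1 ∧ f^[fibS (i+1)] x = c}).Nonempty ∧
    preimDist f c (fibS (i+1)) < preimDist f c (fibS i) := ((hcut hf).2 i).1

lemma zeta_fib_lt (i : ℕ) : preimDist f c (fibS (i+1)) < preimDist f c (fibS i) :=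
  (zeta_fib_mem hf i).2.2

lemma zeta_fib_pos (i : ℕ) : 0 < preimDist f c (fibS i) :=
  lt_of_le_of_lt (zeta_nonneg _) (zeta_fib_lt hf i)

lemma zeta_fib_anti {i j : ℕ} (h : i ≤ j) :
    preimDist f c (fibS j) ≤ preimDist f c (fibS i) := by
  induction j with
  | zero => simp_all
  | succ k ih =>
    rcases Nat.lt_or_ge i (k+1) with h' | h'
    · exact le_trans (zeta_fib_lt hf k).le (ih (by omega))
    · have : i = k + 1 := by omega
      subst this; rfl

lemma zeta_fib_anti_strict {i j : ℕ} (h : i < j) :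
    preimDist f c (fibS j) < preimDist f c (fibS i) := by
  obtain ⟨k, rfl⟩ := Nat.exists_eq_add_of_lt h
  calc preimDist f c (fibS (i + k + 1)) ≤ preimDist f c (fibS (i+1)) :=
        zeta_fib_anti hf (by omega)
    _ < preimDist f c (fibS i) := zeta_fib_lt hf i

lemma preS_nonempty {k : ℕ} (hk : 1 ≤ k) :
    ({x | x ∈ Set.Icc (0:ℝ) 1 ∧ f^[k] x = c}).Nonempty := by
  obtain ⟨i, rfl⟩ : ∃ i, i + 1 = k := ⟨k - 1, by omega⟩
  have h1 : ({x | x ∈ Set.Icc (0:ℝ) 1 ∧ f^[fibS (i+1)] x = c}).Nonempty :=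
    (zeta_fib_mem hf i).2.1
  rcases h1 with ⟨x, hx1, hx2⟩
  have hle : i + 1 ≤ fibS (i+1) := (lt_fibS (i+1)).le
  refine ⟨f^[fibS (i+1) - (i+1)] x, Set.MapsTo.iterate (hmaps hf) _ hx1, ?_⟩
  rw [← Function.iterate_add_apply]
  rwa [Nat.add_sub_cancel' hle]

lemma zeta_lower {i k : ℕ} (h1 : fibS i ≤ k) (h2 : k < fibS (i+1)) :
    preimDist f c (fibS i) ≤ preimDist f c k := by
  by_contra hlt
  push_neg at hlt
  have hmem : k ∈ {k | fibS i ≤ k ∧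
      ({x | x ∈ Set.Icc (0:ℝ) 1 ∧ f^[k] x = c}).Nonempty ∧
      preimDist f c k < preimDist f c (fibS i)} :=
    ⟨h1, preS_nonempty hf (le_trans (one_le_fibS i) h1), hlt⟩
  exact absurd (((hcut hf).2 i).2 hmem) (by omega)

omit hf
lemma exists_bracket {k : ℕ} (hk : 1 ≤ k) : ∃ i, fibS i ≤ k ∧ k < fibS (i+1) := by
  set n := Nat.findGreatest (fun i => fibS i ≤ k) k with hn
  have h1 : fibS n ≤ k := Nat.findGreatest_spec (P := fun i => fibS i ≤ k) (Nat.zero_le k) hk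
  refine ⟨n, h1, ?_⟩
  rcases Nat.lt_or_ge k (n+1) with h | h
  · have := lt_fibS (n+1); omega
  · by_contra hcon
    push_neg at hcon
    exact absurd hcon (Nat.findGreatest_is_greatest (P := fun i => fibS i ≤ k)
      (hn ▸ n.lt_succ_self) h)
include hf

lemma zeta_gt {j n : ℕ} (hj : 1 ≤ j) (hjn : j < fibS n) :
    preimDist f c (fibS n) < preimDist f c j := by
  obtain ⟨i, hi1, hi2⟩ := exists_bracket hj
  have hin : i < n := by
    by_contra h
    push_neg at h
    exact absurd (le_trans (fibS_mono h) hi1) (by omega)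
  calc preimDist f c (fibS n) < preimDist f c (fibS i) := zeta_fib_anti_strict hf hin
    _ ≤ preimDist f c j := zeta_lower hf hi1 hi2

lemma zeta_pos {k : ℕ} (hk : 1 ≤ k) : 0 < preimDist f c k := by
  obtain ⟨i, hi1, hi2⟩ := exists_bracket hk
  exact lt_of_lt_of_le (zeta_fib_pos hf i) (zeta_lower hf hi1 hi2)

/-- reflection preserves preimages -/
lemma preS_reflect {k : ℕ} (hk : 1 ≤ k) {x : ℝ} (hx : x ∈ Set.Icc (0:ℝ) 1)
    (hfx : f^[k] x = c) : (1 - x) ∈ Set.Icc (0:ℝ) 1 ∧ f^[k] (1 - x) = c := by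
  refine ⟨⟨by linarith [hx.2], by linarith [hx.1]⟩, ?_⟩
  rw [iter_symm hf hx hk]; exact hfx

/-- both points at distance ζ_{S_n} from c are S_n-preimages of c -/
lemma zeta_endpoints (n : ℕ) :
    (c + preimDist f c (fibS n)) ∈ Set.Icc (0:ℝ) 1 ∧
    f^[fibS n] (c + preimDist f c (fibS n)) = c ∧
    (c - preimDist f c (fibS n)) ∈ Set.Icc (0:ℝ) 1 ∧
    f^[fibS n] (c - preimDist f c (fibS n)) = c := by
  have hc := c_eq_half hf
  have hpos := zeta_fib_pos hf n
  obtain ⟨z, hz1, hz2, hz3⟩ := zeta_attained hf (preS_nonempty hf (one_le_fibS n))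
  have hzne : z ≠ c := by
    intro h; rw [h] at hz3; simp at hz3; linarith
  have hrefl := preS_reflect hf (one_le_fibS n) hz1 hz2
  rcases lt_or_gt_of_ne hzne with h | h
  · -- z < c : c - ζ = z, c + ζ = 1 - z
    have h1 : c - preimDist f c (fibS n) = z := by
      rw [← hz3, abs_of_neg (by linarith)]; ring
    have h2 : c + preimDist f c (fibS n) = 1 - z := by
      rw [← hz3, abs_of_neg (by linarith), hc]; ring
    rw [h1, h2]
    exact ⟨hrefl.1, hrefl.2, hz1, hz2⟩
  · have h1 : c + preimDist f c (fibS n) = z := by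
      rw [← hz3, abs_of_pos (by linarith)]; ring
    have h2 : c - preimDist f c (fibS n) = 1 - z := by
      rw [← hz3, abs_of_pos (by linarith), hc]; ring
    rw [h1, h2]
    exact ⟨hz1, hz2, hrefl.1, hrefl.2⟩


-- ## monotone branches

lemma J_sub (n : ℕ) : Set.Icc c (c + preimDist f c (fibS n)) ⊆ Set.Icc (0:ℝ) 1 := by
  have h1 := (zeta_endpoints hf n).1
  have h2 := (c_mem hf).1
  intro x hx
  exact ⟨le_trans h2 hx.1, le_trans hx.2 h1.2⟩

lemma branch_mono (n : ℕ) :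
    StrictMonoOn (f^[fibS n]) (Set.Icc c (c + preimDist f c (fibS n))) ∨
    StrictAntiOn (f^[fibS n]) (Set.Icc c (c + preimDist f c (fibS n))) := by
  set e := preimDist f c (fibS n) with he
  set J := Set.Icc c (c + e) with hJ
  have hepos : 0 < e := zeta_fib_pos hf n
  have hJ01 : J ⊆ Set.Icc (0:ℝ) 1 := J_sub hf n
  have hJc1 : J ⊆ Set.Icc c 1 := fun x hx => ⟨hx.1, (hJ01 hx).2⟩
  have key : ∀ j, 1 ≤ j → j ≤ fibS n →
      StrictMonoOn (f^[j]) J ∨ StrictAntiOn (f^[j]) J := by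
    intro j
    induction j with
    | zero => omega
    | succ j ih =>
      intro _ hle
      rcases Nat.eq_or_lt_of_le (Nat.one_le_iff_ne_zero.mpr (Nat.succ_ne_zero j)) with h1 | h1
      · -- j + 1 = 1
        right
        obtain rfl : j = 0 := by omega
        simpa using (hantiR hf).mono hJc1
      · -- j ≥ 1
        have hj1 : 1 ≤ j := by omega
        have hjlt : j < fibS n := by omega
        have hIH := ih hj1 (by omega)
        -- image of J under f^[j] avoids c and stays in [0,1]
        have hnoc : ∀ x ∈ J, f^[j] x ≠ c := by
          intro x hx heq
          have h1 : preimDist f c j ≤ |x - c| := zeta_le (hJ01 hx) heq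
          have h2 : |x - c| ≤ e := by
            rw [abs_of_nonneg (by linarith [hx.1])]
            linarith [hx.2]
          have h3 := zeta_gt hf hj1 hjlt
          rw [← he] at h3
          linarith
        set a := f^[j] c with ha
        set b := f^[j] (c + e) with hb
        have hcJ : c ∈ J := ⟨le_refl c, by linarith⟩
        have hceJ : (c + e) ∈ J := ⟨by linarith, le_refl _⟩
        have hpt : ∀ x ∈ J, f^[j] x ∈ Set.uIcc a b := by
          intro x hx
          rcases hIH with hm | hm
          · exact Set.Icc_subset_uIcc ⟨hm.monotoneOn hcJ hx hx.1, hm.monotoneOn hx hceJ hx.2⟩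
          · exact Set.Icc_subset_uIcc' ⟨hm.antitoneOn hx hceJ hx.2, hm.antitoneOn hcJ hx hx.1⟩
        have hcont' : ContinuousOn (f^[j]) (Set.uIcc c (c + e)) := by
          rw [Set.uIcc_of_le (by linarith)]
          exact (cont_iter hf j).mono hJ01
        have hivt : Set.uIcc a b ⊆ f^[j] '' J := by
          have := intermediate_value_uIcc hcont'
          rwa [Set.uIcc_of_le (by linarith : c ≤ c + e)] at this
        have hcnot : c ∉ Set.uIcc a b := by
          intro hcmem
          obtain ⟨x, hxJ, hxeq⟩ := hivt hcmem
          exact hnoc x hxJ hxeq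
        have hane : a ≠ c := fun h => hnoc c hcJ h
        have hbne : b ≠ c := fun h => hnoc (c + e) hceJ h
        have h01 : ∀ x ∈ J, f^[j] x ∈ Set.Icc (0:ℝ) 1 := fun x hx =>
          Set.MapsTo.iterate (hmaps hf) j (hJ01 hx)
        rcases lt_or_gt_of_ne hane with hac | hac <;> rcases lt_or_gt_of_ne hbne with hbc | hbc
        · -- both < c : image in [0, c]
          have hmt : Set.MapsTo (f^[j]) J (Set.Icc 0 c) := by
            intro x hx
            have h1 := hpt x hx
            have h2 := h01 x hx
            refine ⟨h2.1, ?_⟩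
            have : f^[j] x ≤ max a b := (Set.mem_uIcc.mp h1).elim
              (fun h => le_trans h.2 (le_max_right a b)) (fun h => le_trans h.2 (le_max_left a b))
            have hmax : max a b < c := max_lt hac hbc
            linarith
          rw [show j + 1 = 1 + j by omega, Function.iterate_add f 1 j, Function.iterate_one]
          rcases hIH with hm | hm
          · exact Or.inl ((hmonoL hf).comp hm hmt)
          · exact Or.inr ((hmonoL hf).comp_strictAntiOn hm hmt)
        · exact absurd (Set.mem_uIcc.mpr (Or.inl ⟨hac.le, hbc.le⟩)) hcnot
        · exact absurd (Set.mem_uIcc.mpr (Or.inr ⟨hbc.le, hac.le⟩)) hcnot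
        · -- both > c : image in [c, 1]
          have hmt : Set.MapsTo (f^[j]) J (Set.Icc c 1) := by
            intro x hx
            have h1 := hpt x hx
            have h2 := h01 x hx
            refine ⟨?_, h2.2⟩
            have : min a b ≤ f^[j] x := (Set.mem_uIcc.mp h1).elim
              (fun h => le_trans (min_le_left a b) h.1) (fun h => le_trans (min_le_right a b) h.1)
            have hmin : c < min a b := lt_min hac hbc
            linarith
          rw [show j + 1 = 1 + j by omega, Function.iterate_add f 1 j, Function.iterate_one]
          rcases hIH with hm | hm
          · exact Or.inr ((hantiR hf).comp_strictMonoOn hm hmt)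
          · exact Or.inl ((hantiR hf).comp hm hmt)
  exact key (fibS n) (one_le_fibS n) le_rfl

/-- monotone between: images of ordered points are uIcc-ordered -/
lemma branch_between (n : ℕ) {q p : ℝ} (hq : c ≤ q) (hqp : q ≤ p)
    (hp : p ≤ c + preimDist f c (fibS n)) :
    f^[fibS n] q ∈ Set.uIcc (f^[fibS n] c) (f^[fibS n] p) := by
  have hepos : 0 < preimDist f c (fibS n) := zeta_fib_pos hf n
  have hcJ : c ∈ Set.Icc c (c + preimDist f c (fibS n)) := ⟨le_refl c, by linarith⟩
  have hqJ : q ∈ Set.Icc c (c + preimDist f c (fibS n)) := ⟨hq, by linarith⟩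
  have hpJ : p ∈ Set.Icc c (c + preimDist f c (fibS n)) := ⟨by linarith, hp⟩
  rcases branch_mono hf n with hm | hm
  · exact Set.Icc_subset_uIcc ⟨hm.monotoneOn hcJ hqJ hq, hm.monotoneOn hqJ hpJ hqp⟩
  · exact Set.Icc_subset_uIcc' ⟨hm.antitoneOn hqJ hpJ hqp, hm.antitoneOn hcJ hqJ hq⟩

/-- reflection to the right half -/
lemma reflect_right {x : ℝ} (hx : x ∈ Set.Icc (0:ℝ) 1) {k : ℕ} (hk : 1 ≤ k) :
    (c + |x - c|) ∈ Set.Icc (0:ℝ) 1 ∧ f^[k] (c + |x - c|) = f^[k] x := by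
  have hc := c_eq_half hf
  rcases le_or_gt c x with h | h
  · rw [abs_of_nonneg (by linarith)]
    constructor
    · simpa using hx
    · norm_num
  · have h1 : c + |x - c| = 1 - x := by
      rw [abs_of_neg (by linarith), hc]; ring
    rw [h1]
    exact ⟨⟨by linarith [hx.2], by linarith [hx.1]⟩, iter_symm hf hx hk⟩


-- ## abs helpers

omit hf
lemma abs_le_of_between {x d : ℝ} (hx : x ∈ Set.uIcc d c) : |x - c| ≤ |d - c| := by
  rcases Set.mem_uIcc.mp hx with ⟨h1, h2⟩ | ⟨h1, h2⟩
  · rw [abs_of_nonpos (by linarith), abs_of_nonpos (by linarith)]; linarith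
  · rw [abs_of_nonneg (by linarith), abs_of_nonneg (by linarith)]; linarith

lemma eq_of_between_abs {x d : ℝ} (hx : x ∈ Set.uIcc d c) (h : |d - c| ≤ |x - c|) :
    x = d := by
  rcases Set.mem_uIcc.mp hx with ⟨h1, h2⟩ | ⟨h1, h2⟩
  · rw [abs_of_nonpos (by linarith), abs_of_nonpos (by linarith)] at h; linarith
  · rw [abs_of_nonneg (by linarith), abs_of_nonneg (by linarith)] at h; linarith
include hf

-- ## Fact A : ζ_{S_n} < |d_{n+1} - c|

lemma factA (n : ℕ) : preimDist f c (fibS n) < |f^[fibS (n+1)] c - c| := by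
  set e := preimDist f c (fibS (n+1)) with he
  set e' := preimDist f c (fibS (n+2)) with he'
  have hlt : e' < e := zeta_fib_lt hf (n+1)
  have he'pos : 0 < e' := zeta_fib_pos hf (n+2)
  obtain ⟨hz01, hzpre, -, -⟩ := zeta_endpoints hf (n+2)
  set d := f^[fibS (n+1)] c with hd
  set w := f^[fibS (n+1)] (c + e') with hw
  have hw01 : w ∈ Set.Icc (0:ℝ) 1 := Set.MapsTo.iterate (hmaps hf) _ hz01
  have hwpre : f^[fibS n] w = c := by
    rw [hw, ← Function.iterate_add_apply]
    rw [show fibS n + fibS (n+1) = fibS (n+2) by rw [fibS_add_two]; omega]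
    exact hzpre
  obtain ⟨-, hc_e, -, -⟩ := zeta_endpoints hf (n+1)
  have hwu : w ∈ Set.uIcc d c := by
    have := branch_between hf (n+1) (q := c + e') (p := c + e)
      (by linarith) (by linarith) (by rw [← he])
    rwa [hc_e] at this
  have h1 : preimDist f c (fibS n) ≤ |w - c| := zeta_le hw01 hwpre
  have h2 : |w - c| ≤ |d - c| := abs_le_of_between hwu
  rcases lt_or_ge (preimDist f c (fibS n)) (|d - c|) with h | h
  · exact h
  · exfalso
    have hwd : w = d := eq_of_between_abs hwu (by linarith)
    have : f^[fibS (n+2)] c = c := by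
      rw [show fibS (n+2) = fibS n + fibS (n+1) by rw [fibS_add_two]; omega,
        Function.iterate_add_apply]
      rw [← hd, ← hwd]
      exact hwpre
    have := zeta_le (c_mem hf) this
    simp at this
    linarith

-- ## Fact B : |d_{n+2} - c| < ζ_{S_n}

lemma factB (n : ℕ) : |f^[fibS (n+2)] c - c| < preimDist f c (fibS n) := by
  by_contra hcon
  push_neg at hcon
  set E := preimDist f c (fibS n) with hE
  set e := preimDist f c (fibS (n+2)) with hev
  have hEpos : 0 < E := zeta_fib_pos hf n
  have hepos : 0 < e := zeta_fib_pos hf (n+2)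
  set d := f^[fibS (n+2)] c with hd
  obtain ⟨hr01, hrpre, hl01, hlpre⟩ := zeta_endpoints hf n
  obtain ⟨hr01', hrpre', -, -⟩ := zeta_endpoints hf (n+2)
  -- w' : the S_n-preimage at distance E on the same side as d
  set w' := if c ≤ d then c + E else c - E with hw'
  have hw'pre : f^[fibS n] w' = c := by
    rw [hw']; split <;> assumption
  have hw'abs : |w' - c| = E := by
    rw [hw']; split
    · rw [show c + E - c = E by ring, abs_of_pos hEpos]
    · rw [show c - E - c = -E by ring, abs_neg, abs_of_pos hEpos]
  have hw'u : w' ∈ Set.uIcc d c := by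
    rcases le_or_gt c d with h | h
    · have hx : w' = c + E := by rw [hw', if_pos h]
      rw [abs_of_nonneg (by linarith)] at hcon
      rw [hx]
      exact Set.mem_uIcc.mpr (Or.inr ⟨by linarith, by linarith⟩)
    · have hx : w' = c - E := by rw [hw', if_neg (not_le.mpr h)]
      rw [abs_of_neg (by linarith)] at hcon
      rw [hx]
      exact Set.mem_uIcc.mpr (Or.inl ⟨by linarith, by linarith⟩)
  -- pull back w' under f^[fibS (n+2)] on [c, c+e]
  have hcont' : ContinuousOn (f^[fibS (n+2)]) (Set.uIcc c (c + e)) := by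
    rw [Set.uIcc_of_le (by linarith)]
    exact (cont_iter hf _).mono (J_sub hf (n+2))
  have hivt := intermediate_value_uIcc hcont'
  rw [hrpre'] at hivt
  obtain ⟨z, hzJ, hzeq⟩ := hivt hw'u
  rw [Set.uIcc_of_le (by linarith : c ≤ c + e)] at hzJ
  have hz01 : z ∈ Set.Icc (0:ℝ) 1 := J_sub hf (n+2) hzJ
  set k' := fibS n + fibS (n+2) with hk'
  have hzpre : f^[k'] z = c := by
    rw [hk', Function.iterate_add_apply, hzeq]
    exact hw'pre
  have hzne : z ≠ c + e := by
    intro h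
    rw [h, hrpre'] at hzeq
    have : |w' - c| = 0 := by rw [← hzeq]; simp
    rw [hw'abs] at this; linarith
  have hzlt : |z - c| < e := by
    rw [abs_of_nonneg (by linarith [hzJ.1])]
    rcases lt_or_eq_of_le hzJ.2 with h | h
    · linarith
    · exact absurd h hzne
  have hmem : k' ∈ {k | fibS (n+2) ≤ k ∧
      ({x | x ∈ Set.Icc (0:ℝ) 1 ∧ f^[k] x = c}).Nonempty ∧
      preimDist f c k < preimDist f c (fibS (n+2))} := by
    refine ⟨by omega, ⟨z, hz01, hzpre⟩, ?_⟩
    calc preimDist f c k' ≤ |z - c| := zeta_le hz01 hzpre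
      _ < e := hzlt
  have hge : fibS (n+3) ≤ k' := ((hcut hf).2 (n+2)).2 hmem
  have h1 : fibS (n+3) = fibS (n+2) + fibS (n+1) := by rw [fibS_add_two]
  have h2 := fibS_lt_succ n
  have h3 : k' = fibS n + fibS (n+2) := hk'
  omega

-- ## Fact C : y_n lies between d_n and c

lemma y_between (n : ℕ) :
    f^[fibS n + fibS (n+2)] c ∈ Set.uIcc (f^[fibS n] c) c := by
  set d2 := f^[fibS (n+2)] c with hd2
  have hd201 : d2 ∈ Set.Icc (0:ℝ) 1 := Set.MapsTo.iterate (hmaps hf) _ (c_mem hf)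
  obtain ⟨hp01, hpeq⟩ := reflect_right hf hd201 (one_le_fibS n)
  have hfb := factB hf n
  obtain ⟨-, hend, -, -⟩ := zeta_endpoints hf n
  have h := branch_between hf n (q := c + |d2 - c|) (p := c + preimDist f c (fibS n))
    (by linarith [abs_nonneg (d2 - c)]) (by linarith) le_rfl
  rw [hend, hpeq] at h
  rwa [← Function.iterate_add_apply] at h


-- ## main induction

lemma main_expansion : ∀ (l : List ℕ) (m n : ℕ), IsFibExpansion l m → l.head? = some n →
    f^[m] c ∈ Set.uIcc (f^[fibS n] c) (f^[fibS n + fibS (n + 2)] c) := by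
  intro l
  induction l with
  | nil => intro m n h hh; simp at hh
  | cons k rest ih =>
    rintro m n ⟨-, hchain, hsum⟩ hh
    have hkn : k = n := by simpa using hh
    subst hkn
    cases rest with
    | nil =>
      simp only [List.map_cons, List.map_nil, List.sum_cons, List.sum_nil, add_zero] at hsum
      subst hsum
      exact Set.left_mem_uIcc
    | cons k2 t =>
      rw [List.Chain', List.isChain_cons_cons] at hchain
      obtain ⟨hk2, hchain'⟩ := hchain
      set m' := ((k2 :: t).map fibS).sum with hm'
      have hsum' : fibS k + m' = m := by
        rw [hm']; simpa using hsum
      have hIH := ih m' k2 ⟨List.cons_ne_nil _ _, hchain', rfl⟩ rfl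
      set x := f^[m'] c with hx
      have hx01 : x ∈ Set.Icc (0:ℝ) 1 := Set.MapsTo.iterate (hmaps hf) _ (c_mem hf)
      -- x is between d_{k2} and c
      have hxu : x ∈ Set.uIcc (f^[fibS k2] c) c :=
        Set.uIcc_subset_uIcc Set.left_mem_uIcc (y_between hf k2) hIH
      have hxabs : |x - c| ≤ |f^[fibS k2] c - c| := abs_le_of_between hxu
      -- |x - c| ≤ |d_{k+2} - c|
      have hkey : |x - c| ≤ |f^[fibS (k + 2)] c - c| := by
        rcases Nat.eq_or_lt_of_le hk2 with h | h
        · rw [← h] at hxabs; exact hxabs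
        · obtain ⟨j, rfl⟩ : ∃ j, j + 2 = k2 := ⟨k2 - 2, by omega⟩
          have h1 : |f^[fibS (j + 2)] c - c| < preimDist f c (fibS j) := factB hf j
          have h2 : preimDist f c (fibS j) ≤ preimDist f c (fibS (k + 1)) :=
            zeta_fib_anti hf (by omega)
          have h3 : preimDist f c (fibS (k + 1)) < |f^[fibS (k + 2)] c - c| := factA hf (k + 1)
          linarith
      have hdlt : |f^[fibS (k + 2)] c - c| < preimDist f c (fibS k) := factB hf k
      -- reflect x and d_{k+2} to the right side
      have hd201 : f^[fibS (k + 2)] c ∈ Set.Icc (0:ℝ) 1 :=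
        Set.MapsTo.iterate (hmaps hf) _ (c_mem hf)
      obtain ⟨-, hqeq⟩ := reflect_right hf hx01 (one_le_fibS k)
      obtain ⟨-, hpeq⟩ := reflect_right hf hd201 (one_le_fibS k)
      have hb := branch_between hf k (q := c + |x - c|) (p := c + |f^[fibS (k + 2)] c - c|)
        (by linarith [abs_nonneg (x - c)]) (by linarith) (by linarith)
      rw [hqeq, hpeq] at hb
      rw [← Function.iterate_add_apply] at hb
      rw [hx, ← Function.iterate_add_apply, hsum'] at hb
      exact hb

-- ## existence of Fibonacci expansions

omit hf
lemma fib_summand_le {l : List ℕ} {j : ℕ} (hj : j ∈ l) : fibS j ≤ (l.map fibS).sum := by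
  apply List.single_le_sum (fun x _ => Nat.zero_le x)
  exact List.mem_map_of_mem (f := fibS) hj

lemma exists_expansion : ∀ m : ℕ, 1 ≤ m → ∃ (l : List ℕ) (n : ℕ),
    IsFibExpansion l m ∧ l.head? = some n := by
  intro m
  induction m using Nat.strong_induction_on with
  | _ m IH =>
    intro hm
    obtain ⟨n, h1, h2⟩ := exists_bracket hm
    set m' := m - fibS n with hm'
    rcases Nat.eq_zero_or_pos m' with h0 | h0
    · refine ⟨[n], n, ⟨List.cons_ne_nil _ _, List.isChain_singleton _, ?_⟩, rfl⟩
      simp; omega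
    · have hmlt : m' < m := by have := fibS_pos n; omega
      obtain ⟨l', n', hexp', hh'⟩ := IH m' hmlt h0
      have hn2 : 2 ≤ n := by
        by_contra hcon
        push_neg at hcon
        interval_cases n
        · have a1 : fibS 0 = 1 := rfl
          have a2 : fibS (0+1) = 2 := rfl
          have a3 : fibS 1 = 2 := rfl
          omega
        · have a1 : fibS 1 = 2 := rfl
          have a2 : fibS (1+1) = 3 := rfl
          have a3 : fibS 2 = 3 := rfl
          omega
      obtain ⟨n0, rfl⟩ : ∃ n0, n0 + 2 = n := ⟨n - 2, by omega⟩
      have hfib : fibS (n0 + 3) = fibS (n0 + 2) + fibS (n0 + 1) := fibS_add_two (n0 + 1)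
      have hm'lt : m' < fibS (n0 + 1) := by
        have : fibS (n0 + 2 + 1) = fibS (n0 + 3) := rfl
        omega
      have hbound : ∀ j ∈ l', j + 2 ≤ n0 + 2 := by
        intro j hj
        have := fib_summand_le (l := l') hj
        rw [hexp'.2.2] at this
        have : fibS j < fibS (n0 + 1) := by omega
        have := fibS_strictMono.lt_iff_lt.mp this
        omega
      refine ⟨l' ++ [n0 + 2], n', ⟨?_, ?_, ?_⟩, ?_⟩
      · simp
      · rw [List.Chain', List.isChain_append]
        refine ⟨hexp'.2.1, List.isChain_singleton _, ?_⟩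
        intro a ha b hb
        simp only [List.head?_cons, Option.mem_def, Option.some.injEq] at hb
        subst hb
        obtain ⟨hne, rfl⟩ := List.mem_getLast?_eq_getLast ha
        exact hbound _ (List.getLast_mem hne)
      · rw [List.map_append, List.sum_append]
        simp only [List.map_cons, List.map_nil, List.sum_cons, List.sum_nil, add_zero]
        rw [hexp'.2.2]
        omega
      · rw [List.head?_append]
        obtain ⟨a, t, rfl⟩ : ∃ a t, l' = a :: t := by
          cases l' with
          | nil => exact absurd hexp'.1 (by simp)
          | cons a t => exact ⟨a, t, rfl⟩
        simpa using hh'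

end Main

/-- For a Fibonacci map, the forward critical orbit is contained in the union of the
closed intervals with endpoints `d_n = f^{S_n}(c)` and `y_n = f^{S_n+S_{n+2}}(c)`:
every `f^m(c)` with `m ≥ 1` lies in some such interval, and one may take `n` so that
`S_n` is the leading summand of the Fibonacci sum expression of `m`. -/
theorem fibonacci_orbit_in_d_y_intervals (f : ℝ → ℝ) (c : ℝ)
    (hf : IsFibonacciMap f c) :
    (∀ m : ℕ, 1 ≤ m →
      ∃ n : ℕ, f^[m] c ∈ Set.uIcc (f^[fibS n] c) (f^[fibS n + fibS (n + 2)] c)) ∧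
    (∀ (m n : ℕ) (l : List ℕ), IsFibExpansion l m → l.head? = some n →
      f^[m] c ∈ Set.uIcc (f^[fibS n] c) (f^[fibS n + fibS (n + 2)] c)) := by
  constructor
  · intro m hm
    obtain ⟨l, n, hexp, hh⟩ := exists_expansion m hm
    exact ⟨n, main_expansion hf l m n hexp hh⟩
  · intro m n l hexp hh
    exact main_expansion hf l m n hexp hh

end
end
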